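/- arXiv:1901.10709 — 5 statements merged into one kernel-verified Lean document; each statement's English description precedes it below -/
import Mathlib

section
/- Suppose the environment p : ℤ → [ε₀, 1-ε₀] satisfies Σ(N) > √N for some N, where Σ is the potential. Then the nearest-neighbor walk (Z_t) started at 0 satisfies P(max_{t ≤ T} Z_t > N) < exp(-√N / 2) for T = exp(√N / 2). -/
open MeasureTheory

/-- The potential `Σ` of an environment `p : ℤ → (0,1)`. -/
noncomputable def pot (p : ℤ → ℝ) (n : ℤ) : ℝ :=
  if 1 ≤ n then ∑ j ∈ Finset.Icc 1 n, (Real.log (1 - p j) - Real.log (p j))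
  else -∑ j ∈ Finset.Icc (n + 1) 0, (Real.log (1 - p j) - Real.log (p j))

/-- The scale function `M(n) = ∑_{j=0}^{n-1} e^{Σ(j)}` for `n ≥ 1`,
`M(n) = -∑_{j=n}^{-1} e^{Σ(j)}` for `n ≤ -1`, `M(0)=0`. -/
noncomputable def scaleFn (p : ℤ → ℝ) (n : ℤ) : ℝ :=
  if 1 ≤ n then ∑ j ∈ Finset.Icc 0 (n - 1), Real.exp (pot p j)
  else -∑ j ∈ Finset.Icc n (-1), Real.exp (pot p j)

/-- `Z` is the nearest-neighbor random walk on `ℤ` in environment `p`, started at `z0`. -/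
structure IsNNWalk {Ω : Type*} [MeasurableSpace Ω] (P : Measure Ω)
    (p : ℤ → ℝ) (Z : ℕ → Ω → ℤ) (z0 : ℤ) : Prop where
  meas : ∀ t, Measurable (Z t)
  init : ∀ᵐ ω ∂P, Z 0 ω = z0
  stepUp : ∀ (t : ℕ) (z : ℕ → ℤ),
    P {ω | (∀ s ≤ t, Z s ω = z s) ∧ Z (t + 1) ω = z t + 1}
      = ENNReal.ofReal (p (z t)) * P {ω | ∀ s ≤ t, Z s ω = z s}
  stepDown : ∀ (t : ℕ) (z : ℕ → ℤ),
    P {ω | (∀ s ≤ t, Z s ω = z s) ∧ Z (t + 1) ω = z t - 1}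
      = ENNReal.ofReal (1 - p (z t)) * P {ω | ∀ s ≤ t, Z s ω = z s}

namespace WalkAux

/-- position of the ±1 path encoded by `ε`. -/
def X (ε : ℕ → Bool) : ℕ → ℤ
  | 0 => 0
  | t+1 => X ε t + (if ε t then 1 else -1)

/-- weight of one step from site `j` in direction `b`. -/
def wstep (p : ℤ → ℝ) (j : ℤ) (b : Bool) : ℝ := if b then p j else 1 - p j

/-- weight of the length-`t` prefix of the path `ε`. -/
def wt (p : ℤ → ℝ) (ε : ℕ → Bool) : ℕ → ℝ
  | 0 => 1
  | t+1 => wt p ε t * wstep p (X ε t) (ε t)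

lemma X_congr {ε ε' : ℕ → Bool} : ∀ {t}, (∀ i < t, ε i = ε' i) → X ε t = X ε' t
  | 0, _ => rfl
  | t+1, h => by
      have ht : X ε t = X ε' t := X_congr (fun i hi => h i (Nat.lt_succ_of_lt hi))
      simp [X, ht, h t (Nat.lt_succ_self t)]

lemma wt_congr {p : ℤ → ℝ} {ε ε' : ℕ → Bool} :
    ∀ {t}, (∀ i < t, ε i = ε' i) → wt p ε t = wt p ε' t
  | 0, _ => rfl
  | t+1, h => by
      have ht : wt p ε t = wt p ε' t := wt_congr (fun i hi => h i (Nat.lt_succ_of_lt hi))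
      have hX : X ε t = X ε' t := X_congr (fun i hi => h i (Nat.lt_succ_of_lt hi))
      simp [wt, ht, hX, h t (Nat.lt_succ_self t)]

lemma wstep_nonneg {p : ℤ → ℝ} (hp : ∀ j, 0 ≤ p j ∧ p j ≤ 1) (j : ℤ) (b : Bool) :
    0 ≤ wstep p j b := by
  cases b <;> simp [wstep] <;> [linarith [(hp j).2]; exact (hp j).1]

lemma wt_nonneg {p : ℤ → ℝ} (hp : ∀ j, 0 ≤ p j ∧ p j ≤ 1) (ε : ℕ → Bool) :
    ∀ t, 0 ≤ wt p ε t
  | 0 => by simp [wt]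
  | t+1 => mul_nonneg (wt_nonneg hp ε t) (wstep_nonneg hp _ _)

end WalkAux
namespace WalkAux

lemma Icc_sum_top (a b : ℤ) (h : a ≤ b) (f : ℤ → ℝ) :
    ∑ k ∈ Finset.Icc a b, f k = ∑ k ∈ Finset.Icc a (b-1), f k + f b := by
  have : Finset.Icc a b = insert b (Finset.Icc a (b-1)) := by
    ext x; simp only [Finset.mem_Icc, Finset.mem_insert]; omega
  rw [this, Finset.sum_insert (by simp only [Finset.mem_Icc]; omega)]
  ring

lemma pot_zero (p : ℤ → ℝ) : pot p 0 = 0 := by simp [pot]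

lemma pot_succ (p : ℤ → ℝ) {j : ℤ} (hj : 1 ≤ j) :
    pot p j = pot p (j-1) + (Real.log (1 - p j) - Real.log (p j)) := by
  rcases eq_or_lt_of_le hj with h1 | h1
  · rw [← h1]; simp [pot, pot_zero]
  · have hj2 : (2:ℤ) ≤ j := h1
    rw [pot, pot, if_pos hj, if_pos (by omega)]
    rw [Icc_sum_top 1 j hj]

/-- the basic balance relation `p j e^{Σ(j)} = (1-p j) e^{Σ(j-1)}`. -/
lemma balance {p : ℤ → ℝ} (hp : ∀ j, 0 < p j ∧ p j < 1) {j : ℤ} (hj : 1 ≤ j) :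
    p j * Real.exp (pot p j) = (1 - p j) * Real.exp (pot p (j-1)) := by
  have h0 : p j ≠ 0 := ne_of_gt (hp j).1
  rw [pot_succ p hj, Real.exp_add, Real.exp_sub,
    Real.exp_log (by linarith [(hp j).2]), Real.exp_log (hp j).1]
  field_simp

end WalkAux

namespace WalkAux

noncomputable def D (p : ℤ → ℝ) (N : ℕ) : ℝ := ∑ k ∈ Finset.Icc (0:ℤ) N, Real.exp (pot p k)

noncomputable def hf (p : ℤ → ℝ) (N : ℕ) (j : ℤ) : ℝ :=
  (∑ k ∈ Finset.Icc (0:ℤ) (j-1), Real.exp (pot p k)) / D p N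

lemma D_pos (p : ℤ → ℝ) (N : ℕ) : 0 < D p N := by
  apply Finset.sum_pos (fun k _ => Real.exp_pos _)
  exact ⟨0, by simp [Finset.mem_Icc]⟩

lemma exp_pot_le_D (p : ℤ → ℝ) (N : ℕ) : Real.exp (pot p N) ≤ D p N := by
  apply Finset.single_le_sum (f := fun k => Real.exp (pot p k))
    (fun k _ => (Real.exp_pos _).le)
  simp [Finset.mem_Icc]

lemma hf_nonneg (p : ℤ → ℝ) (N : ℕ) (j : ℤ) : 0 ≤ hf p N j :=
  div_nonneg (Finset.sum_nonneg fun k _ => (Real.exp_pos _).le) (D_pos p N).le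

lemma hf_nonpos (p : ℤ → ℝ) (N : ℕ) {j : ℤ} (hj : j ≤ 0) : hf p N j = 0 := by
  unfold hf
  rw [Finset.Icc_eq_empty (by omega)]
  simp

lemma hf_one (p : ℤ → ℝ) (N : ℕ) : hf p N 1 = 1 / D p N := by
  unfold hf
  norm_num [pot_zero]

lemma hf_top (p : ℤ → ℝ) (N : ℕ) : hf p N (N+1) = 1 := by
  unfold hf
  simp only [add_sub_cancel_right]
  exact div_self (D_pos p N).ne'

lemma hf_succ_sub (p : ℤ → ℝ) (N : ℕ) {j : ℤ} (hj : 0 ≤ j) :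
    hf p N (j+1) = hf p N j + Real.exp (pot p j) / D p N := by
  unfold hf
  rw [show j + 1 - 1 = j by ring, Icc_sum_top 0 j hj]
  rw [add_div]

lemma harmonic {p : ℤ → ℝ} (hp : ∀ j, 0 < p j ∧ p j < 1) (N : ℕ) {j : ℤ} (hj : 1 ≤ j) :
    p j * hf p N (j+1) + (1 - p j) * hf p N (j-1) = hf p N j := by
  have h1 := hf_succ_sub p N (show (0:ℤ) ≤ j by omega)
  have h2 := hf_succ_sub p N (show (0:ℤ) ≤ j - 1 by omega)
  rw [show j - 1 + 1 = j by ring] at h2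
  have hb := balance hp hj
  have hD := (D_pos p N).ne'
  have : p j * (Real.exp (pot p j) / D p N) = (1 - p j) * (Real.exp (pot p (j-1)) / D p N) := by
    rw [mul_div_assoc'] at *
    rw [mul_div_assoc', hb]
  linear_combination p j * h1 - (1 - p j) * h2 + this

lemma super {p : ℤ → ℝ} (hp : ∀ j, 0 < p j ∧ p j < 1) (N : ℕ) (j : ℤ) :
    p j * hf p N (j+1) + (1 - p j) * hf p N (j-1) ≤ hf p N 1 + hf p N j := by
  rcases lt_trichotomy j 0 with hj | hj | hj
  · rw [hf_nonpos p N (by omega : j + 1 ≤ 0), hf_nonpos p N (by omega : j - 1 ≤ 0)]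
    simpa using add_nonneg (hf_nonneg p N 1) (hf_nonneg p N j)
  · subst hj
    have e1 : hf p N ((0:ℤ)-1) = 0 := hf_nonpos p N (by norm_num)
    have e0 : hf p N (0:ℤ) = 0 := hf_nonpos p N le_rfl
    rw [e1, e0, show ((0:ℤ)+1) = 1 from rfl]
    have := hf_nonneg p N 1
    have := (hp 0).2
    have := (hp 0).1
    nlinarith
  · rw [harmonic hp N hj]
    linarith [hf_nonneg p N 1]

end WalkAux

namespace WalkAux

open scoped Classical

def ext (R : ℕ) (f : Fin R → Bool) : ℕ → Bool := fun i => if h : i < R then f ⟨i, h⟩ else false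

noncomputable def G (p : ℤ → ℝ) (N T R : ℕ) (ε : ℕ → Bool) : ℝ :=
  if ∃ i ≤ R, (N:ℤ) < X ε i then 1 else ((T:ℝ) - R) * hf p N 1 + hf p N (X ε R)

noncomputable def S (p : ℤ → ℝ) (N T R : ℕ) : ℝ :=
  ∑ f : Fin R → Bool, wt p (ext R f) R * G p N T R (ext R f)

def snocE (R : ℕ) : (Fin R → Bool) × Bool ≃ (Fin (R+1) → Bool) where
  toFun y := fun i => if h : (i:ℕ) < R then y.1 ⟨i, h⟩ else y.2
  invFun g := (fun i => g i.castSucc, g (Fin.last R))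
  left_inv := by
    rintro ⟨f, b⟩
    refine Prod.ext ?_ ?_
    · funext i
      show (if h : ((i.castSucc : Fin (R+1)) : ℕ) < R then f ⟨_, h⟩ else b) = f i
      rw [dif_pos (by simpa using i.isLt)]
      exact congrArg f (Fin.ext rfl)
    · show (if h : ((Fin.last R : Fin (R+1)) : ℕ) < R then f ⟨_, h⟩ else b) = b
      rw [dif_neg (by simp)]
  right_inv := by
    intro g
    funext i
    by_cases h : (i:ℕ) < R
    · show (if h' : (i:ℕ) < R then g (Fin.castSucc ⟨i, h'⟩) else g (Fin.last R)) = g i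
      rw [dif_pos h]
      exact congrArg g (Fin.ext rfl)
    · show (if h' : (i:ℕ) < R then g (Fin.castSucc ⟨i, h'⟩) else g (Fin.last R)) = g i
      rw [dif_neg h]
      have hi := i.isLt
      exact congrArg g (Fin.ext (by simp [Fin.last]; omega))

lemma S_zero (p : ℤ → ℝ) (N T : ℕ) : S p N T 0 = (T:ℝ) * hf p N 1 := by
  have : ∀ f : Fin 0 → Bool, wt p (ext 0 f) 0 * G p N T 0 (ext 0 f) = (T:ℝ) * hf p N 1 := by
    intro f
    have hG : G p N T 0 (ext 0 f) = (T:ℝ) * hf p N 1 := by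
      rw [G, if_neg]
      · show ((T:ℝ) - (0:ℕ)) * hf p N 1 + hf p N (X (ext 0 f) 0) = _
        rw [show X (ext 0 f) 0 = 0 from rfl, hf_nonpos p N le_rfl]
        push_cast; ring
      · rintro ⟨i, hi, hlt⟩
        interval_cases i
        simp only [X] at hlt
        omega
    rw [hG, show wt p (ext 0 f) 0 = 1 from rfl, one_mul]
  rw [S, Finset.sum_congr rfl (fun f _ => this f)]
  simp

end WalkAux
namespace WalkAux

open scoped Classical

lemma S_step {p : ℤ → ℝ} (hp : ∀ j, 0 < p j ∧ p j < 1) (N T R : ℕ) (hR : R < T) :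
    S p N T (R+1) ≤ S p N T R := by
  have hp01 : ∀ j, 0 ≤ p j ∧ p j ≤ 1 := fun j => ⟨(hp j).1.le, (hp j).2.le⟩
  rw [S, S, ← Equiv.sum_comp (snocE R)
    (fun g => wt p (ext (R+1) g) (R+1) * G p N T (R+1) (ext (R+1) g)), Fintype.sum_prod_type]
  apply Finset.sum_le_sum
  intro f _
  rw [Fintype.sum_bool]
  set ε0 := ext R f with hε0
  have e1 : ∀ b : Bool, ∀ i, i < R → ext (R+1) (snocE R (f, b)) i = ε0 i := by
    intro b i hi
    show (if h : i < R+1 then (snocE R (f, b)) ⟨i, h⟩ else false) = ext R f i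
    rw [dif_pos (by omega : i < R+1)]
    show (if h : i < R then f ⟨i, h⟩ else b) = ext R f i
    rw [dif_pos hi, ext, dif_pos hi]
  have eR : ∀ b : Bool, ext (R+1) (snocE R (f, b)) R = b := by
    intro b
    show (if h : R < R+1 then (snocE R (f, b)) ⟨R, h⟩ else false) = b
    rw [dif_pos (Nat.lt_succ_self R)]
    show (if h : R < R then f ⟨R, h⟩ else b) = b
    rw [dif_neg (lt_irrefl R)]
  set εt := ext (R+1) (snocE R (f, true)) with hεt
  set εf := ext (R+1) (snocE R (f, false)) with hεf
  have eRt : εt R = true := eR true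
  have eRf : εf R = false := eR false
  have hXt : ∀ i, i ≤ R → X εt i = X ε0 i :=
    fun i hi => X_congr (fun j hj => e1 true j (by omega))
  have hXf : ∀ i, i ≤ R → X εf i = X ε0 i :=
    fun i hi => X_congr (fun j hj => e1 false j (by omega))
  set e := X ε0 R with he
  have hXt1 : X εt (R+1) = e + 1 := by
    show X εt R + (if εt R then 1 else -1) = e + 1
    rw [hXt R le_rfl, eRt]
    norm_num
    rfl
  have hXf1 : X εf (R+1) = e - 1 := by
    show X εf R + (if εf R then 1 else -1) = e - 1
    rw [hXf R le_rfl, eRf]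
    norm_num
    ring
  have hwt : wt p εt (R+1) = wt p ε0 R * p e := by
    show wt p εt R * wstep p (X εt R) (εt R) = _
    rw [wt_congr (fun j hj => e1 true j hj), hXt R le_rfl, eRt]
    rfl
  have hwf : wt p εf (R+1) = wt p ε0 R * (1 - p e) := by
    show wt p εf R * wstep p (X εf R) (εf R) = _
    rw [wt_congr (fun j hj => e1 false j hj), hXf R le_rfl, eRf]
    rfl
  rw [hwt, hwf]
  by_cases hbad : ∃ i ≤ R, (N:ℤ) < X ε0 i
  · have g1 : G p N T (R+1) εt = 1 := by
      rw [G, if_pos]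
      obtain ⟨i, hi, h⟩ := hbad
      exact ⟨i, by omega, by rw [hXt i hi]; exact h⟩
    have g2 : G p N T (R+1) εf = 1 := by
      rw [G, if_pos]
      obtain ⟨i, hi, h⟩ := hbad
      exact ⟨i, by omega, by rw [hXf i hi]; exact h⟩
    have g0 : G p N T R ε0 = 1 := by rw [G, if_pos hbad]
    rw [g1, g2, g0]
    exact le_of_eq (by ring)
  · push_neg at hbad
    have heN : e ≤ (N:ℤ) := hbad R le_rfl
    have hfn1 := hf_nonneg p N 1
    have hTR : (0:ℝ) ≤ (T:ℝ) - ((R:ℝ)+1) := by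
      have : ((R:ℝ)+1) ≤ (T:ℝ) := by exact_mod_cast hR
      linarith
    have gup : G p N T (R+1) εt ≤ ((T:ℝ) - ((R:ℝ)+1)) * hf p N 1 + hf p N (e+1) := by
      rw [G]
      split_ifs with hex
      · have heq : e = (N:ℤ) := by
          obtain ⟨i, hi, h⟩ := hex
          by_cases hiR : i ≤ R
          · rw [hXt i hiR] at h
            exact absurd h (not_lt.mpr (hbad i hiR))
          · have hieq : i = R+1 := by omega
            subst hieq
            rw [hXt1] at h
            omega
        rw [heq, hf_top]
        linarith [mul_nonneg hTR hfn1]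
      · rw [hXt1]
        push_cast
        exact le_refl _
    have gdn : G p N T (R+1) εf = ((T:ℝ) - ((R:ℝ)+1)) * hf p N 1 + hf p N (e-1) := by
      rw [G, if_neg, hXf1]
      · push_cast
        ring
      · rintro ⟨i, hi, h⟩
        by_cases hiR : i ≤ R
        · rw [hXf i hiR] at h
          exact absurd h (not_lt.mpr (hbad i hiR))
        · have hieq : i = R+1 := by omega
          subst hieq
          rw [hXf1] at h
          omega
    have g0 : G p N T R ε0 = ((T:ℝ) - (R:ℝ)) * hf p N 1 + hf p N e := by
      rw [G, if_neg (by push_neg; exact hbad)]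
    rw [g0, gdn]
    have hsup := super hp N e
    have hwnn := wt_nonneg hp01 ε0 R
    have hA : p e * G p N T (R+1) εt ≤ p e * (((T:ℝ) - ((R:ℝ)+1)) * hf p N 1 + hf p N (e+1)) :=
      mul_le_mul_of_nonneg_left gup (hp e).1.le
    have key : p e * G p N T (R+1) εt
        + (1 - p e) * (((T:ℝ) - ((R:ℝ)+1)) * hf p N 1 + hf p N (e-1))
        ≤ ((T:ℝ) - (R:ℝ)) * hf p N 1 + hf p N e := by
      nlinarith [hA, hsup, (hp e).1.le, (hp e).2.le, hfn1]
    calc wt p ε0 R * p e * G p N T (R+1) εt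
          + wt p ε0 R * (1 - p e) * (((T:ℝ) - ((R:ℝ)+1)) * hf p N 1 + hf p N (e-1))
        = wt p ε0 R * (p e * G p N T (R+1) εt
            + (1 - p e) * (((T:ℝ) - ((R:ℝ)+1)) * hf p N 1 + hf p N (e-1))) := by ring
      _ ≤ wt p ε0 R * (((T:ℝ) - (R:ℝ)) * hf p N 1 + hf p N e) :=
          mul_le_mul_of_nonneg_left key hwnn

end WalkAux
namespace WalkAux

open scoped Classical

lemma G_nonneg {p : ℤ → ℝ} (N T R : ℕ) (hR : R ≤ T) (ε : ℕ → Bool) : 0 ≤ G p N T R ε := by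
  rw [G]
  split_ifs
  · norm_num
  · have hTR : (0:ℝ) ≤ (T:ℝ) - (R:ℝ) := by
      have : (R:ℝ) ≤ (T:ℝ) := by exact_mod_cast hR
      linarith
    exact add_nonneg (mul_nonneg hTR (hf_nonneg p N 1)) (hf_nonneg p N _)

lemma S_le {p : ℤ → ℝ} (hp : ∀ j, 0 < p j ∧ p j < 1) (N T : ℕ) :
    ∀ R, R ≤ T → S p N T R ≤ (T:ℝ) * hf p N 1
  | 0, _ => le_of_eq (S_zero p N T)
  | (R+1), h => le_trans (S_step hp N T R (by omega)) (S_le hp N T R (by omega))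

lemma badsum_le {p : ℤ → ℝ} (hp : ∀ j, 0 < p j ∧ p j < 1) (N T : ℕ) :
    ∑ f ∈ Finset.univ.filter (fun f : Fin T → Bool => ∃ i ≤ T, (N:ℤ) < X (ext T f) i),
      wt p (ext T f) T ≤ (T:ℝ) * hf p N 1 := by
  have hp01 : ∀ j, 0 ≤ p j ∧ p j ≤ 1 := fun j => ⟨(hp j).1.le, (hp j).2.le⟩
  refine le_trans ?_ (S_le hp N T T le_rfl)
  rw [S]
  calc ∑ f ∈ Finset.univ.filter (fun f : Fin T → Bool => ∃ i ≤ T, (N:ℤ) < X (ext T f) i),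
        wt p (ext T f) T
      = ∑ f ∈ Finset.univ.filter (fun f : Fin T → Bool => ∃ i ≤ T, (N:ℤ) < X (ext T f) i),
        wt p (ext T f) T * G p N T T (ext T f) := by
        refine Finset.sum_congr rfl (fun f hfm => ?_)
        rw [G, if_pos (Finset.mem_filter.mp hfm).2, mul_one]
    _ ≤ ∑ f : Fin T → Bool, wt p (ext T f) T * G p N T T (ext T f) :=
        Finset.sum_le_sum_of_subset_of_nonneg (Finset.filter_subset _ _)
          (fun f _ _ => mul_nonneg (wt_nonneg hp01 _ _) (G_nonneg N T T le_rfl _))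

end WalkAux
namespace WalkAux

open scoped Classical

variable {Ω : Type*} [MeasurableSpace Ω] {P : Measure Ω} [IsProbabilityMeasure P]
  {p : ℤ → ℝ} {Z : ℕ → Ω → ℤ}

lemma cyl_measurable (hZ : IsNNWalk P p Z 0) (z : ℕ → ℤ) (t : ℕ) :
    MeasurableSet {ω | ∀ s ≤ t, Z s ω = z s} := by
  have : {ω | ∀ s ≤ t, Z s ω = z s} = ⋂ s ∈ Set.Iic t, Z s ⁻¹' {z s} := by
    ext ω; simp [Set.mem_iInter, Set.mem_preimage]
  rw [this]
  exact MeasurableSet.biInter (Set.to_countable _)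
    (fun s _ => hZ.meas s (measurableSet_singleton _))

lemma cylP (hZ : IsNNWalk P p Z 0) (hp01 : ∀ j, 0 ≤ p j ∧ p j ≤ 1) (ε : ℕ → Bool) :
    ∀ t, P {ω | ∀ s ≤ t, Z s ω = X ε s} = ENNReal.ofReal (wt p ε t) := by
  intro t
  induction t with
  | zero =>
    have hset : {ω | ∀ s ≤ 0, Z s ω = X ε s} = {ω | Z 0 ω = 0} := by
      ext ω
      constructor
      · intro h; exact h 0 le_rfl
      · intro h s hs
        rw [Nat.le_zero.mp hs]
        exact h
    rw [hset, show wt p ε 0 = 1 from rfl, ENNReal.ofReal_one]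
    have hm : MeasurableSet {ω | Z 0 ω = 0} := hZ.meas 0 (measurableSet_singleton 0)
    refine (prob_compl_eq_zero_iff hm).mp ?_
    have := ae_iff.mp hZ.init
    simpa [Set.compl_setOf] using this
  | succ t ih =>
    cases hb : ε t with
    | true =>
      have hX1 : X ε (t+1) = X ε t + 1 := by simp [X, hb]
      have hset : {ω | ∀ s ≤ t+1, Z s ω = X ε s}
          = {ω | (∀ s ≤ t, Z s ω = (fun s => X ε s) s) ∧ Z (t+1) ω = (fun s => X ε s) t + 1} := by
        ext ω
        constructor
        · intro h
          exact ⟨fun s hs => h s (Nat.le_succ_of_le hs), by rw [h (t+1) le_rfl]; exact hX1⟩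
        · rintro ⟨h1, h2⟩ s hs
          rcases Nat.lt_succ_iff_lt_or_eq.mp (Nat.lt_succ_of_le hs) with hlt | heq
          · exact h1 s (by omega)
          · subst heq; rw [h2, hX1]
      rw [hset, hZ.stepUp t (fun s => X ε s), ih,
        ← ENNReal.ofReal_mul (hp01 (X ε t)).1]
      congr 1
      show p (X ε t) * wt p ε t = wt p ε t * wstep p (X ε t) (ε t)
      rw [hb]
      show p (X ε t) * wt p ε t = wt p ε t * p (X ε t)
      ring
    | false =>
      have hX1 : X ε (t+1) = X ε t - 1 := by simp [X, hb]; ring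
      have hset : {ω | ∀ s ≤ t+1, Z s ω = X ε s}
          = {ω | (∀ s ≤ t, Z s ω = (fun s => X ε s) s) ∧ Z (t+1) ω = (fun s => X ε s) t - 1} := by
        ext ω
        constructor
        · intro h
          exact ⟨fun s hs => h s (Nat.le_succ_of_le hs), by rw [h (t+1) le_rfl]; exact hX1⟩
        · rintro ⟨h1, h2⟩ s hs
          rcases Nat.lt_succ_iff_lt_or_eq.mp (Nat.lt_succ_of_le hs) with hlt | heq
          · exact h1 s (by omega)
          · subst heq; rw [h2, hX1]
      rw [hset, hZ.stepDown t (fun s => X ε s), ih,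
        ← ENNReal.ofReal_mul (by linarith [(hp01 (X ε t)).2] : 0 ≤ 1 - p (X ε t))]
      congr 1
      show (1 - p (X ε t)) * wt p ε t = wt p ε t * wstep p (X ε t) (ε t)
      rw [hb]
      show (1 - p (X ε t)) * wt p ε t = wt p ε t * (1 - p (X ε t))
      ring

lemma cylbad (hZ : IsNNWalk P p Z 0) (hp01 : ∀ j, 0 ≤ p j ∧ p j ≤ 1) (z : ℕ → ℤ) (t : ℕ) :
    P ({ω | ∀ s ≤ t, Z s ω = z s}
        ∩ {ω | ¬ (Z (t+1) ω = Z t ω + 1 ∨ Z (t+1) ω = Z t ω - 1)}) = 0 := by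
  set C := {ω | ∀ s ≤ t, Z s ω = z s} with hC
  set U := {ω | (∀ s ≤ t, Z s ω = z s) ∧ Z (t+1) ω = z t + 1} with hU
  set D := {ω | (∀ s ≤ t, Z s ω = z s) ∧ Z (t+1) ω = z t - 1} with hD
  have hPU : P U = ENNReal.ofReal (p (z t)) * P C := hZ.stepUp t z
  have hPD : P D = ENNReal.ofReal (1 - p (z t)) * P C := hZ.stepDown t z
  have hsum : P U + P D = P C := by
    rw [hPU, hPD, ← add_mul, ← ENNReal.ofReal_add (hp01 (z t)).1
      (by linarith [(hp01 (z t)).2])]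
    norm_num
  have hUC : U ⊆ C := fun ω hω => hω.1
  have hDC : D ⊆ C := fun ω hω => hω.1
  have hmU : MeasurableSet U := by
    have : U = C ∩ Z (t+1) ⁻¹' {z t + 1} := by
      ext ω; simp [hU, hC, Set.mem_setOf_eq, Set.mem_preimage]
    rw [this]
    exact (cyl_measurable hZ z t).inter (hZ.meas (t+1) (measurableSet_singleton _))
  have hmD : MeasurableSet D := by
    have : D = C ∩ Z (t+1) ⁻¹' {z t - 1} := by
      ext ω; simp [hD, hC, Set.mem_setOf_eq, Set.mem_preimage]
    rw [this]
    exact (cyl_measurable hZ z t).inter (hZ.meas (t+1) (measurableSet_singleton _))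
  have hdisj : Disjoint U D := by
    rw [Set.disjoint_iff]
    rintro ω ⟨⟨_, h1⟩, ⟨_, h2⟩⟩
    rw [h1] at h2
    omega
  have hPUD : P (U ∪ D) = P C := by
    rw [measure_union hdisj hmD, hsum]
  have hdiff : P (C \ (U ∪ D)) = 0 := by
    rw [measure_diff (Set.union_subset hUC hDC) (hmU.union hmD).nullMeasurableSet
      (measure_ne_top P _), hPUD, tsub_self]
  refine measure_mono_null ?_ hdiff
  rintro ω ⟨hωC, hωB⟩
  refine ⟨hωC, ?_⟩
  rintro (hωU | hωD)
  · exact hωB (Or.inl (by rw [hωU.2, hωC t le_rfl]))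
  · exact hωB (Or.inr (by rw [hωD.2, hωC t le_rfl]))

lemma badstep (hZ : IsNNWalk P p Z 0) (hp01 : ∀ j, 0 ≤ p j ∧ p j ≤ 1) (t : ℕ) :
    P {ω | ¬ (Z (t+1) ω = Z t ω + 1 ∨ Z (t+1) ω = Z t ω - 1)} = 0 := by
  have cover : {ω | ¬ (Z (t+1) ω = Z t ω + 1 ∨ Z (t+1) ω = Z t ω - 1)}
      ⊆ ⋃ (c : Fin (t+1) → ℤ),
        ({ω | ∀ s ≤ t, Z s ω = (fun s => if h : s < t+1 then c ⟨s, h⟩ else 0) s}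
          ∩ {ω | ¬ (Z (t+1) ω = Z t ω + 1 ∨ Z (t+1) ω = Z t ω - 1)}) := by
    intro ω hω
    refine Set.mem_iUnion.mpr ⟨fun i => Z i ω, ⟨?_, hω⟩⟩
    intro s hs
    show Z s ω = if h : s < t+1 then Z s ω else 0
    rw [dif_pos (by omega)]
  refine measure_mono_null cover (measure_iUnion_null fun c => ?_)
  exact cylbad hZ hp01 _ t

end WalkAux

/-- If `Σ(N) > √N`, then for `T = exp(√N/2)` the walk started at `0` satisfies
`P(max_{t ≤ T} Z_t > N) < exp(-√N/2)`. -/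
theorem walk_no_escape_right (ε₀ : ℝ) (hε₀ : 0 < ε₀) (hε₀' : ε₀ < 1/2)
    (p : ℤ → ℝ) (hp : ∀ j, p j ∈ Set.Icc ε₀ (1 - ε₀))
    {Ω : Type*} [MeasurableSpace Ω] (P : Measure Ω) [IsProbabilityMeasure P]
    (Z : ℕ → Ω → ℤ) (hZ : IsNNWalk P p Z 0)
    (N : ℕ) (hN : Real.sqrt N < pot p N) :
    P {ω | ∃ t : ℕ, (t : ℝ) ≤ Real.exp (Real.sqrt N / 2) ∧ (N : ℤ) < Z t ω}
      < ENNReal.ofReal (Real.exp (-Real.sqrt N / 2)) := by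
  classical
  have hp' : ∀ j, 0 < p j ∧ p j < 1 := fun j =>
    ⟨lt_of_lt_of_le hε₀ (hp j).1, lt_of_le_of_lt (hp j).2 (by linarith)⟩
  have hp01 : ∀ j, 0 ≤ p j ∧ p j ≤ 1 := fun j => ⟨(hp' j).1.le, (hp' j).2.le⟩
  set T : ℕ := ⌊Real.exp (Real.sqrt N / 2)⌋₊ with hT
  set Bad : Finset (Fin T → Bool) :=
    Finset.univ.filter (fun f : Fin T → Bool =>
      ∃ i ≤ T, (N:ℤ) < WalkAux.X (WalkAux.ext T f) i) with hBad
  -- the good event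
  set Good : Set Ω := {ω | Z 0 ω = 0}
    ∩ ⋂ t : ℕ, {ω | Z (t+1) ω = Z t ω + 1 ∨ Z (t+1) ω = Z t ω - 1} with hGoodDef
  have hGoodC : P Goodᶜ = 0 := by
    rw [hGoodDef, Set.compl_inter, Set.compl_iInter]
    refine measure_union_null ?_ (measure_iUnion_null fun t => ?_)
    · have := ae_iff.mp hZ.init
      simpa [Set.compl_setOf] using this
    · have := WalkAux.badstep hZ hp01 t
      simpa [Set.compl_setOf] using this
  -- covering the escape event by bad cylinders
  have hsub : {ω | ∃ t : ℕ, (t : ℝ) ≤ Real.exp (Real.sqrt N / 2) ∧ (N : ℤ) < Z t ω}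
      ⊆ (⋃ f ∈ Bad, {ω | ∀ s ≤ T, Z s ω = WalkAux.X (WalkAux.ext T f) s}) ∪ Goodᶜ := by
    intro ω hω
    by_cases hg : ω ∈ Good
    · left
      obtain ⟨hz0, hstep⟩ := hg
      have hstep' : ∀ t : ℕ, Z (t+1) ω = Z t ω + 1 ∨ Z (t+1) ω = Z t ω - 1 := by
        intro t
        have := Set.mem_iInter.mp hstep t
        exact this
      set εω : ℕ → Bool := fun i => if Z (i+1) ω = Z i ω + 1 then true else false with hεω
      have hZX : ∀ s, Z s ω = WalkAux.X εω s := by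
        intro s
        induction s with
        | zero => exact hz0
        | succ s ih =>
          rcases hstep' s with h | h
          · have : εω s = true := if_pos h
            show Z (s+1) ω = WalkAux.X εω s + (if εω s then 1 else -1)
            rw [this, h, ih]
            norm_num
          · have hne : ¬ (Z (s+1) ω = Z s ω + 1) := by omega
            have : εω s = false := if_neg hne
            show Z (s+1) ω = WalkAux.X εω s + (if εω s then 1 else -1)
            rw [this, h, ih]
            norm_num
            ring
      obtain ⟨t0, ht0R, ht0⟩ := hω
      have htT : t0 ≤ T := Nat.le_floor ht0R
      set f : Fin T → Bool := fun i => εω i with hfdef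
      have hagree : ∀ j, j < T → WalkAux.ext T f j = εω j := by
        intro j hj
        show (if h : j < T then f ⟨j, h⟩ else false) = εω j
        rw [dif_pos hj]
      have hXe : ∀ s, s ≤ T → WalkAux.X (WalkAux.ext T f) s = WalkAux.X εω s :=
        fun s hs => WalkAux.X_congr (fun j hj => hagree j (by omega))
      have hfB : f ∈ Bad := by
        rw [hBad, Finset.mem_filter]
        exact ⟨Finset.mem_univ f, ⟨t0, htT, by rw [hXe t0 htT, ← hZX t0]; exact ht0⟩⟩
      have hωC : ω ∈ {ω | ∀ s ≤ T, Z s ω = WalkAux.X (WalkAux.ext T f) s} := by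
        intro s hs
        rw [hXe s hs]
        exact hZX s
      exact Set.mem_biUnion hfB hωC
    · right; exact hg
  -- measure bound
  have hb1 : P {ω | ∃ t : ℕ, (t : ℝ) ≤ Real.exp (Real.sqrt N / 2) ∧ (N : ℤ) < Z t ω}
      ≤ ∑ f ∈ Bad, ENNReal.ofReal (WalkAux.wt p (WalkAux.ext T f) T) := by
    refine le_trans (measure_mono hsub) ?_
    refine le_trans (measure_union_le _ _) ?_
    rw [hGoodC, add_zero]
    refine le_trans (measure_biUnion_finset_le _ _) ?_
    refine le_of_eq (Finset.sum_congr rfl (fun f _ => ?_))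
    exact WalkAux.cylP hZ hp01 _ T
  -- combinatorial bound
  have hb2 : ∑ f ∈ Bad, ENNReal.ofReal (WalkAux.wt p (WalkAux.ext T f) T)
      ≤ ENNReal.ofReal ((T:ℝ) * WalkAux.hf p N 1) := by
    rw [← ENNReal.ofReal_sum_of_nonneg
      (fun f _ => WalkAux.wt_nonneg hp01 _ T)]
    exact ENNReal.ofReal_le_ofReal (WalkAux.badsum_le hp' N T)
  -- numerics
  have hDpos := WalkAux.D_pos p N
  have hfone : WalkAux.hf p N 1 ≤ Real.exp (-(pot p N)) := by
    rw [WalkAux.hf_one, Real.exp_neg, inv_eq_one_div]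
    exact one_div_le_one_div_of_le (Real.exp_pos _) (WalkAux.exp_pot_le_D p N)
  have hTle : (T:ℝ) ≤ Real.exp (Real.sqrt N / 2) := Nat.floor_le (Real.exp_pos _).le
  have hnum : (T:ℝ) * WalkAux.hf p N 1 < Real.exp (-Real.sqrt N / 2) := by
    have h1 : (T:ℝ) * WalkAux.hf p N 1
        ≤ Real.exp (Real.sqrt N / 2) * Real.exp (-(pot p N)) :=
      mul_le_mul hTle hfone (WalkAux.hf_nonneg p N 1) (Real.exp_pos _).le
    have h2 : Real.exp (Real.sqrt N / 2) * Real.exp (-(pot p N))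
        < Real.exp (Real.sqrt N / 2) * Real.exp (-(Real.sqrt N)) :=
      mul_lt_mul_of_pos_left (Real.exp_lt_exp.mpr (by linarith)) (Real.exp_pos _)
    have h3 : Real.exp (Real.sqrt N / 2) * Real.exp (-(Real.sqrt N))
        = Real.exp (-Real.sqrt N / 2) := by
      rw [← Real.exp_add]
      congr 1
      ring
    linarith
  calc P {ω | ∃ t : ℕ, (t : ℝ) ≤ Real.exp (Real.sqrt N / 2) ∧ (N : ℤ) < Z t ω}
      ≤ ENNReal.ofReal ((T:ℝ) * WalkAux.hf p N 1) := le_trans hb1 hb2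
    _ < ENNReal.ofReal (Real.exp (-Real.sqrt N / 2)) :=
        (ENNReal.ofReal_lt_ofReal_iff (Real.exp_pos _)).mpr hnum
end

section
/- Let α be irrational and 𝔭 ∈ C^∞(𝕋,(0,1)) with ∫ ln 𝔭 ≠ ∫ ln(1-𝔭). Then 𝔭 can be approximated arbitrarily well in the C^∞ topology by functions 𝔭̄ ∈ C^∞(𝕋,(0,1)) for which there exist a nonzero constant c and ψ ∈ C^∞(𝕋, ℝ) with ln(1-𝔭̄(x)) - ln 𝔭̄(x) = c + ψ(x+α) - ψ(x) for all x. -/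
open Function Set Complex MeasureTheory
open scoped Real

local notation "𝕋" => AddCircle (1:ℝ)

noncomputable def Complex.abs : AbsoluteValue ℂ ℝ := IsAbsoluteValue.toAbsoluteValue (norm : ℂ → ℝ)

lemma Complex.abs_natCast (k : ℕ) : Complex.abs (k : ℂ) = k := by
  show ‖(k : ℂ)‖ = k
  simp

lemma Complex.abs_ofReal (r : ℝ) : Complex.abs (r : ℂ) = |r| := by
  show ‖(r : ℂ)‖ = |r|
  simp

lemma aux_fourier_eq (m : ℤ) (y : ℝ) :
    fourier m ((y : ℝ) : 𝕋) = Complex.exp ((2 * Real.pi * m * y : ℝ) * Complex.I) := by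
  rw [fourier_coe_apply]
  push_cast
  ring_nf

lemma aux_exp_ne_one {α : ℝ} (hα : Irrational α) {m : ℤ} (hm : m ≠ 0) :
    Complex.exp ((2 * Real.pi * m * α : ℝ) * Complex.I) ≠ 1 := by
  intro h
  rw [Complex.exp_eq_one_iff] at h
  obtain ⟨k, hk⟩ := h
  have h2 : ((2 * Real.pi * m * α : ℝ) : ℂ) * Complex.I = ((2 * Real.pi * k : ℝ) : ℂ) * Complex.I := by
    rw [hk]; push_cast; ring
  have h3 : (2 * Real.pi * m * α : ℝ) = 2 * Real.pi * k := by
    have := mul_right_cancel₀ Complex.I_ne_zero h2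
    exact_mod_cast this
  have hπ : (2 * Real.pi) ≠ 0 := by positivity
  have h4 : (m : ℝ) * α = k := by
    have : 2 * Real.pi * ((m:ℝ) * α) = 2 * Real.pi * (k:ℝ) := by ring_nf; ring_nf at h3; linarith
    exact mul_left_cancel₀ hπ this
  have h5 : α = (k : ℝ) / (m : ℝ) := by
    field_simp at h4 ⊢
    linarith [h4]
  exact (irrational_iff_ne_rational α).mp hα k m hm h5

lemma aux_weyl (α : ℝ) (hα : Irrational α) (u : ℝ → ℝ) (hu : Continuous u)
    (hper : Function.Periodic u 1) (hmean : ∫ x in (0:ℝ)..1, u x = 0) {ε : ℝ} (hε : 0 < ε) :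
    ∃ N₀ : ℕ, 1 ≤ N₀ ∧ ∀ N, N₀ ≤ N → ∀ x : ℝ,
      |(N:ℝ)⁻¹ * ∑ k ∈ Finset.range N, u (x + k * α)| ≤ ε := by
  haveI : Fact ((0:ℝ) < 1) := ⟨zero_lt_one⟩
  set δ := ε / 3 with hδ
  have hδpos : 0 < δ := by positivity
  -- the lifted function
  have hperC : Function.Periodic (fun x : ℝ => (u x : ℂ)) 1 := fun x => by simp [hper x]
  set F : 𝕋 → ℂ := hperC.lift with hF
  have hFcoe : ∀ y : ℝ, F (y : 𝕋) = (u y : ℂ) := fun y => hperC.lift_coe y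
  have hFcont : Continuous F := by
    apply Continuous.quotient_liftOn'
    exact Complex.continuous_ofReal.comp hu
  set FC : C(𝕋, ℂ) := ⟨F, hFcont⟩ with hFC
  -- dense span of fourier monomials
  have h1 : FC ∈ (Submodule.span ℂ (Set.range (@fourier 1))).topologicalClosure := by
    rw [span_fourier_closure_eq_top]; exact Submodule.mem_top
  have hmem : FC ∈ closure ((Submodule.span ℂ (Set.range (@fourier 1))) : Set C(𝕋, ℂ)) := by
    rw [← Submodule.topologicalClosure_coe]; exact h1
  obtain ⟨P, hPs, hdist⟩ := Metric.mem_closure_iff.mp hmem δ hδpos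
  obtain ⟨c, hc⟩ := Finsupp.mem_span_range_iff_exists_finsupp.mp hPs
  have hPy : ∀ q : 𝕋, P q = ∑ m ∈ c.support, c m • fourier m q := by
    intro q
    rw [← hc]
    simp [Finsupp.sum]
  -- the rotation multipliers
  set z : ℤ → ℂ := fun m => Complex.exp ((2 * Real.pi * m * α : ℝ) * Complex.I) with hz
  have hzne : ∀ m : ℤ, m ≠ 0 → z m ≠ 1 := fun m hm => aux_exp_ne_one hα hm
  have habs_exp : ∀ t : ℝ, Complex.abs (Complex.exp ((t:ℂ) * Complex.I)) = 1 :=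
    fun t => Complex.norm_exp_ofReal_mul_I t
  have hgeom : ∀ m : ℤ, m ≠ 0 → ∀ N : ℕ,
      Complex.abs (∑ k ∈ Finset.range N, (z m) ^ k) ≤ 2 / Complex.abs (z m - 1) := by
    intro m hm N
    rw [geom_sum_eq (hzne m hm) N, map_div₀]
    gcongr
    · calc Complex.abs ((z m) ^ N - 1) ≤ Complex.abs ((z m) ^ N) + Complex.abs 1 := by
            simpa using Complex.abs.sub_le_add ((z m)^N) 1
        _ ≤ 2 := by
            rw [map_pow, hz]
            simp only [habs_exp, one_pow, map_one]
            norm_num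
  -- integrability on the compact circle
  haveI : IsProbabilityMeasure (volume : Measure 𝕋) := ⟨UnitAddCircle.measure_univ⟩
  have hint : ∀ g : C(𝕋, ℂ), Integrable (fun q => g q) volume := by
    intro g
    exact g.continuous.integrable_of_hasCompactSupport
      (IsCompact.of_isClosed_subset isCompact_univ (isClosed_tsupport _) (Set.subset_univ _))
  -- the mean of F is zero
  have hIF : (∫ q : 𝕋, F q) = 0 := by
    rw [← AddCircle.integral_preimage (1:ℝ) 0 F]
    have : ∀ a : ℝ, F ((a : ℝ) : 𝕋) = ((u a : ℝ) : ℂ) := hFcoe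
    rw [MeasureTheory.setIntegral_congr_fun measurableSet_Ioc (fun a _ => this a)]
    have h0 : (∫ a in Set.Ioc (0:ℝ) (0+1), ((u a : ℝ) : ℂ)) = ((∫ a in Set.Ioc (0:ℝ) (0+1), u a : ℝ) : ℂ) :=
      integral_ofReal
    rw [h0]
    norm_num
    rw [← intervalIntegral.integral_of_le zero_le_one] at *
    exact_mod_cast hmean
  -- the mean of each nonconstant monomial is zero
  have hIfourier : ∀ m : ℤ, m ≠ 0 → (∫ q : 𝕋, fourier m q) = 0 := by
    intro m hm
    rw [← AddCircle.integral_preimage (1:ℝ) 0 (fun q => fourier m q)]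
    have hcm : (2 * (Real.pi:ℂ) * Complex.I * m) ≠ 0 := by
      simp [Complex.I_ne_zero, Real.pi_ne_zero, hm, two_ne_zero]
    have : ∀ a : ℝ, fourier m ((a : ℝ) : 𝕋) = Complex.exp ((2 * (Real.pi:ℂ) * Complex.I * m) * a) := by
      intro a
      rw [aux_fourier_eq m a]
      congr 1
      push_cast
      ring
    rw [MeasureTheory.setIntegral_congr_fun measurableSet_Ioc (fun a _ => this a)]
    rw [← intervalIntegral.integral_of_le (by norm_num : (0:ℝ) ≤ 0 + 1)]
    norm_num
    rw [integral_exp_mul_complex hcm]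
    have he1 : Complex.exp (2 * (Real.pi:ℂ) * Complex.I * m * ((1:ℝ):ℂ)) = 1 := by
      have := Complex.exp_int_mul_two_pi_mul_I m
      rw [← this]
      congr 1
      push_cast
      ring
    rw [he1]
    simp
  -- the mean of P is its constant coefficient
  have hIP : (∫ q : 𝕋, P q) = c 0 := by
    have hPfun : (fun q : 𝕋 => P q) = fun q => ∑ m ∈ c.support, c m • fourier m q := by
      funext q; exact hPy q
    rw [hPfun, MeasureTheory.integral_finset_sum]
    · have : ∀ m ∈ c.support, (∫ q : 𝕋, c m • fourier m q) = if m = 0 then c 0 else 0 := by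
        intro m _
        rw [MeasureTheory.integral_smul]
        by_cases hm : m = 0
        · subst hm
          simp only [if_pos rfl]
          have : (fun q : 𝕋 => fourier 0 q) = fun _ => (1:ℂ) := by
            funext q; exact fourier_zero
          rw [this, MeasureTheory.integral_const]
          simp
        · rw [hIfourier m hm, if_neg hm, smul_zero]
      rw [Finset.sum_congr rfl this, Finset.sum_ite_eq' c.support 0 (fun _ => c 0)]
      split
      · rfl
      · rename_i h0
        exact (Finsupp.notMem_support_iff.mp h0).symm
    · intro m _
      exact (hint (c m • fourier m)).congr (by simp)
  -- hence the constant coefficient is small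
  have habs0 : Complex.abs (c 0) ≤ δ := by
    have hsub : (c 0 : ℂ) = ∫ q : 𝕋, (P q - F q) := by
      rw [MeasureTheory.integral_sub (hint P) ?_]
      · rw [hIP]
        conv_lhs => rw [show (c 0 : ℂ) = c 0 - 0 by ring]
        rw [hIF]
      · exact hint FC
    rw [hsub]
    have hb : ∀ q : 𝕋, ‖P q - F q‖ ≤ δ := by
      intro q
      have h1 : ‖P q - F q‖ = dist (P q) (FC q) := by
        rw [dist_eq_norm]; rfl
      rw [h1]
      calc dist (P q) (FC q) ≤ dist P FC := ContinuousMap.dist_apply_le_dist q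
        _ = dist FC P := dist_comm P FC
        _ ≤ δ := le_of_lt hdist
    calc Complex.abs (∫ q : 𝕋, (P q - F q)) = ‖∫ q : 𝕋, (P q - F q)‖ := rfl
      _ ≤ δ * (volume (Set.univ : Set 𝕋)).toReal :=
          MeasureTheory.norm_integral_le_of_norm_le_const (Filter.Eventually.of_forall hb)
      _ = δ := by simp
  -- choose the threshold
  set Cs : ℝ := ∑ m ∈ c.support.erase 0, Complex.abs (c m) * (2 / Complex.abs (z m - 1)) with hCs
  have hCs0 : 0 ≤ Cs := Finset.sum_nonneg fun m _ => by positivity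
  obtain ⟨N₀, hN₀⟩ := exists_nat_gt (max 1 (Cs / δ))
  have hN₀1 : 1 ≤ N₀ := by
    have : (1:ℝ) < N₀ := lt_of_le_of_lt (le_max_left _ _) hN₀
    exact_mod_cast this.le
  refine ⟨N₀, hN₀1, fun N hN x => ?_⟩
  have hNpos : (0:ℝ) < N := by
    have : (1:ℝ) ≤ N := by exact_mod_cast le_trans hN₀1 hN
    linarith
  set y : ℕ → 𝕋 := fun k => ((x + k*α : ℝ) : 𝕋) with hy
  set w : ℤ → ℂ := fun m => Complex.exp ((2 * Real.pi * m * x : ℝ) * Complex.I) with hw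
  have hfour : ∀ (m : ℤ) (k : ℕ), fourier m (y k) = w m * (z m)^k := by
    intro m k
    rw [hy]
    show fourier m (((x + k*α : ℝ)) : 𝕋) = w m * (z m)^k
    rw [aux_fourier_eq m (x + k*α), hw, hz]
    simp only []
    rw [← Complex.exp_nat_mul, ← Complex.exp_add]
    congr 1
    push_cast
    ring
  have hSP : (∑ k ∈ Finset.range N, P (y k))
      = ∑ m ∈ c.support, c m * (w m * ∑ k ∈ Finset.range N, (z m)^k) := by
    rw [Finset.sum_congr rfl (fun k _ => hPy (y k)), Finset.sum_comm]
    refine Finset.sum_congr rfl fun m _ => ?_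
    calc ∑ k ∈ Finset.range N, c m • fourier m (y k)
        = ∑ k ∈ Finset.range N, c m * w m * (z m) ^ k := by
          refine Finset.sum_congr rfl fun k _ => ?_
          rw [hfour m k, smul_eq_mul]; ring
      _ = c m * (w m * ∑ k ∈ Finset.range N, (z m)^k) := by
          rw [← Finset.mul_sum]; ring
  have hz0 : z 0 = 1 := by rw [hz]; norm_num
  have hwabs : ∀ m : ℤ, Complex.abs (w m) = 1 := fun m => habs_exp _
  have hSPbound : Complex.abs (∑ k ∈ Finset.range N, P (y k))
      ≤ Complex.abs (c 0) * N + Cs := by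
    rw [hSP]
    have hterm0 : Complex.abs (c 0 * (w 0 * ∑ k ∈ Finset.range N, (z 0)^k))
        = Complex.abs (c 0) * N := by
      rw [hz0]
      simp only [one_pow, Finset.sum_const, Finset.card_range, nsmul_eq_mul, mul_one]
      rw [map_mul, map_mul, hwabs, Complex.abs_natCast]
      ring
    have htail : Complex.abs (∑ m ∈ c.support.erase 0, c m * (w m * ∑ k ∈ Finset.range N, (z m)^k)) ≤ Cs := by
      refine le_trans (Complex.abs.sum_le _ _) ?_
      rw [hCs]
      refine Finset.sum_le_sum fun m hm => ?_
      have hm0 : m ≠ 0 := Finset.ne_of_mem_erase hm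
      rw [map_mul, map_mul, hwabs, one_mul]
      exact mul_le_mul_of_nonneg_left (hgeom m hm0 N) (Complex.abs.nonneg _)
    by_cases h0 : (0:ℤ) ∈ c.support
    · rw [← Finset.add_sum_erase _ _ h0]
      calc Complex.abs _ ≤ Complex.abs (c 0 * (w 0 * ∑ k ∈ Finset.range N, (z 0)^k))
            + Complex.abs (∑ m ∈ c.support.erase 0, c m * (w m * ∑ k ∈ Finset.range N, (z m)^k)) :=
          Complex.abs.add_le _ _
        _ ≤ Complex.abs (c 0) * N + Cs := by
            rw [hterm0]; exact add_le_add le_rfl htail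
    · rw [Finset.erase_eq_of_notMem h0] at htail
      refine le_trans htail ?_
      have : 0 ≤ Complex.abs (c 0) * N := by positivity
      linarith
  -- compare F with P along the orbit
  have horbit : Complex.abs ((∑ k ∈ Finset.range N, F (y k)) - ∑ k ∈ Finset.range N, P (y k))
      ≤ N * δ := by
    rw [← Finset.sum_sub_distrib]
    refine le_trans (Complex.abs.sum_le _ _) ?_
    have : ∀ k ∈ Finset.range N, Complex.abs (F (y k) - P (y k)) ≤ δ := by
      intro k _
      have h1 : Complex.abs (F (y k) - P (y k)) = dist (FC (y k)) (P (y k)) := by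
        rw [dist_eq_norm]; rfl
      rw [h1]
      exact le_of_lt (lt_of_le_of_lt (ContinuousMap.dist_apply_le_dist _) hdist)
    refine le_trans (Finset.sum_le_sum this) ?_
    simp
  have hSabs : Complex.abs (∑ k ∈ Finset.range N, F (y k)) ≤ N * δ + (Complex.abs (c 0) * N + Cs) := by
    calc Complex.abs (∑ k ∈ Finset.range N, F (y k))
        ≤ Complex.abs ((∑ k ∈ Finset.range N, F (y k)) - ∑ k ∈ Finset.range N, P (y k))
          + Complex.abs (∑ k ∈ Finset.range N, P (y k)) := by
          have := Complex.abs.sub_le (∑ k ∈ Finset.range N, F (y k)) (∑ k ∈ Finset.range N, P (y k)) 0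
          simpa using this
      _ ≤ N * δ + (Complex.abs (c 0) * N + Cs) := add_le_add horbit hSPbound
  -- put everything together
  have hSreal : ((∑ k ∈ Finset.range N, u (x + k*α) : ℝ) : ℂ) = ∑ k ∈ Finset.range N, F (y k) := by
    push_cast
    exact Finset.sum_congr rfl fun k _ => (hFcoe _).symm
  have habs_eq : |(N:ℝ)⁻¹ * ∑ k ∈ Finset.range N, u (x + k * α)|
      = (N:ℝ)⁻¹ * Complex.abs (∑ k ∈ Finset.range N, F (y k)) := by
    rw [← Complex.abs_ofReal, Complex.ofReal_mul, Complex.ofReal_inv, Complex.ofReal_natCast,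
      hSreal, map_mul, map_inv₀, Complex.abs_natCast]
  rw [habs_eq]
  have hCsN : Cs ≤ δ * N := by
    have h1 : Cs / δ < (N₀:ℝ) := lt_of_le_of_lt (le_max_right _ _) hN₀
    have h2 : (N₀:ℝ) ≤ N := by exact_mod_cast hN
    have : Cs < N * δ := by
      rw [div_lt_iff₀ hδpos] at h1
      nlinarith
    linarith
  calc (N:ℝ)⁻¹ * Complex.abs (∑ k ∈ Finset.range N, F (y k))
      ≤ (N:ℝ)⁻¹ * (N * δ + (Complex.abs (c 0) * N + Cs)) := by
        exact mul_le_mul_of_nonneg_left hSabs (by positivity)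
    _ ≤ (N:ℝ)⁻¹ * (N * δ + (δ * N + δ * N)) := by
        gcongr <;> first | exact habs0 | exact hCsN
    _ = 3 * δ := by field_simp; ring
    _ = ε := by rw [hδ]; ring



lemma auxCD {f : ℝ → ℝ} (hf : ContDiff ℝ (⊤:ℕ∞) f) (n : ℕ) : ContDiff ℝ (n : ℕ∞) f :=
  hf.of_le (by exact_mod_cast le_top)

lemma aux_norm_itd (f : ℝ → ℝ) (n : ℕ) (x : ℝ) :
    ‖iteratedFDeriv ℝ n f x‖ = |iteratedDeriv n f x| := by
  rw [norm_iteratedFDeriv_eq_norm_iteratedDeriv, Real.norm_eq_abs]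

lemma aux_mul_bound {a b : ℝ → ℝ} (ha : ContDiff ℝ (⊤:ℕ∞) a) (hb : ContDiff ℝ (⊤:ℕ∞) b)
    (m : ℕ) {A B : ℝ} (hA0 : 0 ≤ A) (hB0 : 0 ≤ B)
    (hA : ∀ j ≤ m, ∀ x, |iteratedDeriv j a x| ≤ A)
    (hB : ∀ j ≤ m, ∀ x, |iteratedDeriv j b x| ≤ B) :
    ∀ j ≤ m, ∀ x, |iteratedDeriv j (fun y => a y * b y) x| ≤ 2^m * A * B := by
  intro j hj x
  rw [← aux_norm_itd]
  have h := norm_iteratedFDeriv_mul_le (𝕜 := ℝ) (A := ℝ) ha hb x (n := j)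
    (by exact_mod_cast le_top)
  refine le_trans h ?_
  have hterm : ∀ i ∈ Finset.range (j+1),
      (j.choose i : ℝ) * ‖iteratedFDeriv ℝ i a x‖ * ‖iteratedFDeriv ℝ (j-i) b x‖
        ≤ (j.choose i : ℝ) * A * B := by
    intro i hi
    have hi' : i ≤ j := Nat.lt_succ_iff.mp (Finset.mem_range.mp hi)
    have h1 : ‖iteratedFDeriv ℝ i a x‖ ≤ A := by
      rw [aux_norm_itd]; exact hA i (le_trans hi' hj) x
    have h2 : ‖iteratedFDeriv ℝ (j-i) b x‖ ≤ B := by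
      rw [aux_norm_itd]; exact hB (j-i) (le_trans (Nat.sub_le j i) hj) x
    have := norm_nonneg (iteratedFDeriv ℝ i a x)
    have := norm_nonneg (iteratedFDeriv ℝ (j-i) b x)
    have : (0:ℝ) ≤ (j.choose i : ℝ) := by positivity
    gcongr
  refine le_trans (Finset.sum_le_sum hterm) ?_
  have hch : (∑ i ∈ Finset.range (j+1), (j.choose i : ℝ)) = 2^j := by
    exact_mod_cast Nat.sum_range_choose j
  have hsum : ∑ i ∈ Finset.range (j+1), (j.choose i : ℝ) * A * B
      = (2:ℝ)^j * A * B := by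
    rw [← Finset.sum_mul, ← Finset.sum_mul, hch]
  rw [hsum]
  have h2j : (2:ℝ)^j ≤ 2^m := pow_le_pow_right₀ (by norm_num) hj
  have := mul_le_mul_of_nonneg_right (mul_le_mul_of_nonneg_right h2j hA0) hB0
  linarith

lemma aux_comp_bound {Φ : ℝ → ℝ} (hΦ : ContDiff ℝ (⊤:ℕ∞) Φ) (m : ℕ) (K : ℝ) (hK : 0 ≤ K) :
    ∃ M, 0 ≤ M ∧ ∀ w : ℝ → ℝ, ContDiff ℝ (⊤:ℕ∞) w → (∀ j ≤ m, ∀ x, |iteratedDeriv j w x| ≤ K) →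
      ∀ j ≤ m, ∀ x, |iteratedDeriv j (fun y => Φ (w y)) x| ≤ M := by
  -- bound all derivatives of Φ on [-K, K]
  have hbd : ∀ i : ℕ, ∃ C, ∀ y ∈ Icc (-K) K, ‖iteratedFDeriv ℝ i Φ y‖ ≤ C := by
    intro i
    have hcont : Continuous (fun y => iteratedFDeriv ℝ i Φ y) :=
      hΦ.continuous_iteratedFDeriv (by exact_mod_cast le_top)
    obtain ⟨C, hC⟩ := (isCompact_Icc (a := -K) (b := K)).exists_bound_of_continuousOn
      hcont.continuousOn
    exact ⟨C, hC⟩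
  choose g hg using hbd
  set C : ℝ := 1 + ∑ i ∈ Finset.range (m+1), max (g i) 0 with hCdef
  have hC0 : 0 < C := by
    have : (0:ℝ) ≤ ∑ i ∈ Finset.range (m+1), max (g i) 0 :=
      Finset.sum_nonneg fun i _ => le_max_right _ _
    linarith
  have hCg : ∀ i ≤ m, ∀ y ∈ Icc (-K) K, ‖iteratedFDeriv ℝ i Φ y‖ ≤ C := by
    intro i hi y hy
    calc ‖iteratedFDeriv ℝ i Φ y‖ ≤ g i := hg i y hy
      _ ≤ max (g i) 0 := le_max_left _ _
      _ ≤ ∑ i ∈ Finset.range (m+1), max (g i) 0 :=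
          Finset.single_le_sum (fun i _ => le_max_right (g i) 0)
            (Finset.mem_range.mpr (Nat.lt_succ_of_le hi))
      _ ≤ C := by rw [hCdef]; linarith
  set D : ℝ := max K 1 with hDdef
  have hD1 : 1 ≤ D := le_max_right _ _
  refine ⟨(Nat.factorial m : ℝ) * C * D ^ m, by positivity, ?_⟩
  intro w hw hwb j hj x
  have hwx : w x ∈ Icc (-K) K := by
    have h0 := hwb 0 (Nat.zero_le m) x
    rw [iteratedDeriv_zero] at h0
    have h1 := abs_le.mp h0
    exact ⟨h1.1, h1.2⟩
  rw [← aux_norm_itd]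
  have hcomp := norm_iteratedFDeriv_comp_le (g := Φ) (f := w) (n := j)
    hΦ hw (by exact_mod_cast le_top) x
    (C := C) (D := D)
    (fun i hi => hCg i (le_trans hi hj) (w x) hwx)
    (fun i hi1 hij => by
      rw [aux_norm_itd]
      calc |iteratedDeriv i w x| ≤ K := hwb i (le_trans hij hj) x
        _ ≤ D := le_max_left _ _
        _ ≤ D ^ i := le_self_pow₀ hD1 (by omega))
  refine le_trans hcomp ?_
  have h1 : ((Nat.factorial j : ℕ) : ℝ) ≤ ((Nat.factorial m : ℕ) : ℝ) := by
    exact_mod_cast Nat.factorial_le hj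
  have h2 : D ^ j ≤ D ^ m := pow_le_pow_right₀ hD1 hj
  have hj0 : (0:ℝ) < ((Nat.factorial j : ℕ) : ℝ) := by positivity
  have hD0 : (0:ℝ) ≤ D := le_trans zero_le_one hD1
  have t1 := mul_le_mul_of_nonneg_right (mul_le_mul_of_nonneg_right h1 hC0.le) (pow_nonneg hD0 j)
  have t2 := mul_le_mul_of_nonneg_left h2
    (mul_nonneg (le_of_lt (lt_of_lt_of_le hj0 h1)) hC0.le)
  linarith

lemma aux_itd_sub {f g : ℝ → ℝ} (hf : ContDiff ℝ (⊤:ℕ∞) f) (hg : ContDiff ℝ (⊤:ℕ∞) g)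
    (n : ℕ) (x : ℝ) :
    iteratedDeriv n (fun y => f y - g y) x = iteratedDeriv n f x - iteratedDeriv n g x := by
  have := iteratedDerivWithin_sub (Set.mem_univ x) uniqueDiffOn_univ
    ((auxCD hf n).contDiffWithinAt (s := univ)) ((auxCD hg n).contDiffWithinAt (s := univ))
  simpa [iteratedDerivWithin_univ, Pi.sub_def] using this

lemma aux_itd_add' {f g : ℝ → ℝ} (hf : ContDiff ℝ (⊤:ℕ∞) f) (hg : ContDiff ℝ (⊤:ℕ∞) g)
    (n : ℕ) (x : ℝ) :
    iteratedDeriv n (fun y => f y + g y) x = iteratedDeriv n f x + iteratedDeriv n g x := by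
  have := iteratedDerivWithin_add (Set.mem_univ x) uniqueDiffOn_univ
    ((auxCD hf n).contDiffWithinAt (s := univ)) ((auxCD hg n).contDiffWithinAt (s := univ))
  simpa [iteratedDerivWithin_univ, Pi.add_def] using this

lemma aux_deriv_smooth {f : ℝ → ℝ} (hf : ContDiff ℝ (⊤:ℕ∞) f) : ContDiff ℝ (⊤:ℕ∞) (deriv f) :=
  (contDiff_infty_iff_deriv.mp hf).2

lemma aux_diffble {f : ℝ → ℝ} (hf : ContDiff ℝ (⊤:ℕ∞) f) : Differentiable ℝ f :=
  (contDiff_infty_iff_deriv.mp hf).1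

lemma aux_lipschitz {Φ : ℝ → ℝ} (hΦ : ContDiff ℝ (⊤:ℕ∞) Φ) (R : ℝ) :
    ∃ L, 0 ≤ L ∧ ∀ a b : ℝ, a ∈ Icc (-R) R → b ∈ Icc (-R) R → |Φ a - Φ b| ≤ L * |a - b| := by
  obtain ⟨L0, hL0⟩ := (isCompact_Icc (a := -R) (b := R)).exists_bound_of_continuousOn
    (hΦ.continuous_deriv (by exact_mod_cast le_top)).continuousOn
  refine ⟨max L0 0, le_max_right _ _, fun a b ha hb => ?_⟩
  have hder : ∀ y ∈ Icc (-R) R, HasDerivWithinAt Φ (deriv Φ y) (Icc (-R) R) y := fun y _ =>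
    ((aux_diffble hΦ y).hasDerivAt).hasDerivWithinAt
  have hbd : ∀ y ∈ Icc (-R) R, ‖deriv Φ y‖ ≤ max L0 0 := fun y hy =>
    le_trans (hL0 y hy) (le_max_left _ _)
  have := Convex.norm_image_sub_le_of_norm_hasDerivWithin_le hder hbd (convex_Icc _ _) hb ha
  simpa [Real.norm_eq_abs] using this

lemma aux_comp_diff : ∀ (m : ℕ) (Φ : ℝ → ℝ), ContDiff ℝ (⊤:ℕ∞) Φ →
    ∀ (u : ℝ → ℝ), ContDiff ℝ (⊤:ℕ∞) u → ∀ K : ℝ, 0 ≤ K →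
    (∀ j ≤ m, ∀ x, |iteratedDeriv j u x| ≤ K) →
    ∀ ε : ℝ, 0 < ε → ∃ δ : ℝ, 0 < δ ∧ ∀ r : ℝ → ℝ, ContDiff ℝ (⊤:ℕ∞) r →
      (∀ j ≤ m, ∀ x, |iteratedDeriv j r x| ≤ δ) →
      ∀ j ≤ m, ∀ x, |iteratedDeriv j (fun y => Φ (u y) - Φ (u y - r y)) x| ≤ ε := by
  intro m
  induction m with
  | zero =>
    intro Φ hΦ u hu K hK hub ε hε
    obtain ⟨L, hL0, hL⟩ := aux_lipschitz hΦ (K + 1)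
    refine ⟨min 1 (ε / (L + 1)), by positivity, fun r hr hrb j hj x => ?_⟩
    interval_cases j
    rw [iteratedDeriv_zero]
    have hu0 := hub 0 (le_refl 0) x
    rw [iteratedDeriv_zero] at hu0
    have hr0 := hrb 0 (le_refl 0) x
    rw [iteratedDeriv_zero] at hr0
    have hu0' := abs_le.mp hu0
    have hr0' := abs_le.mp (le_trans hr0 (min_le_left _ _))
    have ha : u x ∈ Icc (-(K+1)) (K+1) := ⟨by linarith [hu0'.1], by linarith [hu0'.2]⟩
    have hb : u x - r x ∈ Icc (-(K+1)) (K+1) :=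
      ⟨by linarith [hu0'.1, hr0'.2], by linarith [hu0'.2, hr0'.1]⟩
    calc |Φ (u x) - Φ (u x - r x)| ≤ L * |u x - (u x - r x)| := hL _ _ ha hb
      _ = L * |r x| := by congr 1; ring_nf
      _ ≤ L * (ε / (L + 1)) := by
          have := le_trans hr0 (min_le_right 1 (ε / (L + 1)))
          exact mul_le_mul_of_nonneg_left (le_trans this (le_refl _)) hL0
      _ ≤ ε := by
          have h1 : L / (L + 1) ≤ 1 := by
            rw [div_le_one (by linarith)]; linarith
          calc L * (ε / (L+1)) = (L / (L+1)) * ε := by ring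
            _ ≤ 1 * ε := mul_le_mul_of_nonneg_right h1 hε.le
            _ = ε := one_mul ε
  | succ m IH =>
    intro Φ hΦ u hu K hK hub ε hε
    set Φ' := deriv Φ with hΦ'def
    have hΦ' : ContDiff ℝ (⊤:ℕ∞) Φ' := aux_deriv_smooth hΦ
    set u' := deriv u with hu'def
    have hu' : ContDiff ℝ (⊤:ℕ∞) u' := aux_deriv_smooth hu
    have hub' : ∀ j ≤ m, ∀ x, |iteratedDeriv j u x| ≤ K := fun j hj x =>
      hub j (le_trans hj (Nat.le_succ m)) x
    have hu'b : ∀ j ≤ m, ∀ x, |iteratedDeriv j u' x| ≤ K := by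
      intro j hj x
      rw [hu'def, ← iteratedDeriv_succ']
      exact hub (j+1) (Nat.succ_le_succ hj) x
    -- uniform bound for Φ' ∘ (u - r)
    obtain ⟨M, hM0, hM⟩ := aux_comp_bound hΦ' m (K + 1) (by linarith)
    set ε₁ := ε / (2 * 2^m * (K + M + 2)) with hε₁def
    have hε₁ : 0 < ε₁ := by positivity
    obtain ⟨δ₁, hδ₁0, hδ₁⟩ := IH Φ' hΦ' u hu K hK hub' ε₁ hε₁
    obtain ⟨δ₀, hδ₀0, hδ₀⟩ := IH Φ hΦ u hu K hK hub' ε hε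
    set δm := min δ₀ (min δ₁ (min 1 ε₁)) with hδmdef
    have hδm₀ : δm ≤ δ₀ := min_le_left _ _
    have hδm₁ : δm ≤ δ₁ := le_trans (min_le_right _ _) (min_le_left _ _)
    have hδm1 : δm ≤ 1 := le_trans (min_le_right _ _) (le_trans (min_le_right _ _) (min_le_left _ _))
    have hδmε : δm ≤ ε₁ := le_trans (min_le_right _ _) (le_trans (min_le_right _ _) (min_le_right _ _))
    refine ⟨δm, by positivity, fun r hr hrb j hj x => ?_⟩
    have hrb' : ∀ j ≤ m, ∀ x, |iteratedDeriv j r x| ≤ δm := fun j hj x =>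
      hrb j (le_trans hj (Nat.le_succ m)) x
    rcases Nat.lt_succ_iff_lt_or_eq.mp (Nat.lt_succ_of_le hj) with hjm | hjm
    · -- j ≤ m : use the inductive hypothesis with Φ itself
      have hj' : j ≤ m := Nat.lt_succ_iff.mp hjm
      exact hδ₀ r hr (fun i hi x => le_trans (hrb' i hi x) hδm₀) j hj' x
    · -- j = m + 1
      subst hjm
      set r' := deriv r with hr'def
      have hr' : ContDiff ℝ (⊤:ℕ∞) r' := aux_deriv_smooth hr
      have hr'b : ∀ i ≤ m, ∀ x, |iteratedDeriv i r' x| ≤ δm := by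
        intro i hi x
        rw [hr'def, ← iteratedDeriv_succ']
        exact hrb (i+1) (Nat.succ_le_succ hi) x
      -- smoothness of the pieces
      have hcd1 : ContDiff ℝ (⊤:ℕ∞) (fun y => Φ' (u y) - Φ' (u y - r y)) :=
        (hΦ'.comp hu).sub (hΦ'.comp (hu.sub hr))
      have hcd2 : ContDiff ℝ (⊤:ℕ∞) (fun y => Φ' (u y - r y)) := hΦ'.comp (hu.sub hr)
      have hcdA : ContDiff ℝ (⊤:ℕ∞) (fun y => (Φ' (u y) - Φ' (u y - r y)) * u' y) :=
        hcd1.mul hu'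
      have hcdB : ContDiff ℝ (⊤:ℕ∞) (fun y => Φ' (u y - r y) * r' y) := hcd2.mul hr'
      -- the derivative of the difference
      have hderiv : deriv (fun y => Φ (u y) - Φ (u y - r y))
          = fun y => (Φ' (u y) - Φ' (u y - r y)) * u' y + Φ' (u y - r y) * r' y := by
        funext y
        have h1 : HasDerivAt (fun t => Φ (u t)) (Φ' (u y) * u' y) y :=
          HasDerivAt.comp y ((aux_diffble hΦ (u y)).hasDerivAt) ((aux_diffble hu y).hasDerivAt)
        have h2 : HasDerivAt (fun t => u t - r t) (u' y - r' y) y :=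
          ((aux_diffble hu y).hasDerivAt).sub ((aux_diffble hr y).hasDerivAt)
        have h3 : HasDerivAt (fun t => Φ (u t - r t)) (Φ' (u y - r y) * (u' y - r' y)) y :=
          HasDerivAt.comp y ((aux_diffble hΦ (u y - r y)).hasDerivAt) h2
        have h4 := (h1.sub h3).deriv
        exact h4.trans (by ring)
      rw [iteratedDeriv_succ', hderiv]
      have hsum := aux_itd_add' hcdA hcdB m x
      rw [hsum]
      -- first product
      have hD1 : ∀ i ≤ m, ∀ x, |iteratedDeriv i (fun y => Φ' (u y) - Φ' (u y - r y)) x| ≤ ε₁ :=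
        hδ₁ r hr (fun i hi x => le_trans (hrb' i hi x) hδm₁)
      have hP1 := aux_mul_bound hcd1 hu' m hε₁.le hK hD1 hu'b m (le_refl m) x
      -- second product
      have hwb : ∀ i ≤ m, ∀ x, |iteratedDeriv i (fun y => u y - r y) x| ≤ K + 1 := by
        intro i hi x
        rw [aux_itd_sub hu hr i x]
        have h1 := hub' i hi x
        have h2 := le_trans (hrb' i hi x) hδm1
        calc |iteratedDeriv i u x - iteratedDeriv i r x|
            ≤ |iteratedDeriv i u x| + |iteratedDeriv i r x| := abs_sub _ _
          _ ≤ K + 1 := add_le_add h1 h2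
      have hE1 : ∀ i ≤ m, ∀ x, |iteratedDeriv i (fun y => Φ' (u y - r y)) x| ≤ M :=
        hM (fun y => u y - r y) (hu.sub hr) hwb
      have hE2 : ∀ i ≤ m, ∀ x, |iteratedDeriv i r' x| ≤ ε₁ := fun i hi x =>
        le_trans (hr'b i hi x) hδmε
      have hP2 := aux_mul_bound hcd2 hr' m hM0 hε₁.le hE1 hE2 m (le_refl m) x
      -- combine
      have htri : |iteratedDeriv m (fun y => (Φ' (u y) - Φ' (u y - r y)) * u' y) x
            + iteratedDeriv m (fun y => Φ' (u y - r y) * r' y) x|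
          ≤ 2^m * ε₁ * K + 2^m * M * ε₁ := by
        calc |_ + _| ≤ |iteratedDeriv m (fun y => (Φ' (u y) - Φ' (u y - r y)) * u' y) x|
              + |iteratedDeriv m (fun y => Φ' (u y - r y) * r' y) x| := abs_add_le _ _
          _ ≤ 2^m * ε₁ * K + 2^m * M * ε₁ := add_le_add hP1 hP2
      refine le_trans htri ?_
      have hpos : (0:ℝ) < 2 * 2^m * (K + M + 2) := by positivity
      have heq : 2^m * ε₁ * K + 2^m * M * ε₁ = ε * (K + M) / (2 * (K + M + 2)) := by
        rw [hε₁def]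
        field_simp
      rw [heq]
      rw [div_le_iff₀ (by positivity)]
      nlinarith [hε.le, hK, hM0]



lemma aux_itd_periodic {f : ℝ → ℝ} (hf : Periodic f 1) (n : ℕ) :
    Periodic (iteratedDeriv n f) 1 := by
  intro x
  have h2 : (fun z : ℝ => f (z + 1)) = f := funext fun z => hf z
  calc iteratedDeriv n f (x + 1) = iteratedDeriv n (fun z => f (z + 1)) x := by
        rw [iteratedDeriv_comp_add_const]
      _ = iteratedDeriv n f x := by rw [h2]

lemma aux_bdd {f : ℝ → ℝ} (hf : ContDiff ℝ (⊤:ℕ∞) f) (hper : Periodic f 1) (n : ℕ) :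
    ∃ K, 0 ≤ K ∧ ∀ j ≤ n, ∀ x, |iteratedDeriv j f x| ≤ K := by
  have hb : ∀ j : ℕ, ∃ C, ∀ x, |iteratedDeriv j f x| ≤ C := by
    intro j
    have hcont : Continuous (iteratedDeriv j f) :=
      hf.continuous_iteratedDeriv j (by exact_mod_cast le_top)
    obtain ⟨C, hC⟩ := (isCompact_Icc (a := (0:ℝ)) (b := 1)).exists_bound_of_continuousOn
      hcont.continuousOn
    refine ⟨C, fun x => ?_⟩
    obtain ⟨y, hy, hxy⟩ := (aux_itd_periodic hper j).exists_mem_Ico₀ zero_lt_one x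
    rw [hxy]
    have := hC y ⟨hy.1, hy.2.le⟩
    simpa [Real.norm_eq_abs] using this
  choose g hg using hb
  refine ⟨1 + ∑ j ∈ Finset.range (n+1), max (g j) 0, by positivity, fun j hj x => ?_⟩
  calc |iteratedDeriv j f x| ≤ g j := hg j x
    _ ≤ max (g j) 0 := le_max_left _ _
    _ ≤ ∑ j ∈ Finset.range (n+1), max (g j) 0 :=
        Finset.single_le_sum (fun i _ => le_max_right (g i) 0)
          (Finset.mem_range.mpr (Nat.lt_succ_of_le hj))
    _ ≤ 1 + ∑ j ∈ Finset.range (n+1), max (g j) 0 := by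
        have h0 : (0:ℝ) ≤ ∑ j ∈ Finset.range (n+1), max (g j) 0 :=
          Finset.sum_nonneg fun i _ => le_max_right (g i) 0
        linarith

lemma aux_itd_smooth {f : ℝ → ℝ} (hf : ContDiff ℝ (⊤:ℕ∞) f) (i : ℕ) :
    ContDiff ℝ (⊤:ℕ∞) (iteratedDeriv i f) := by
  induction i generalizing f with
  | zero => simpa [iteratedDeriv_zero] using hf
  | succ m ih =>
    have : iteratedDeriv (m+1) f = iteratedDeriv m (deriv f) := by
      rw [iteratedDeriv_succ']
    rw [this]
    exact ih (aux_deriv_smooth hf)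

lemma aux_itd_const_mul {f : ℝ → ℝ} (hf : ContDiff ℝ (⊤:ℕ∞) f) (c : ℝ) (n : ℕ) (x : ℝ) :
    iteratedDeriv n (fun y => c * f y) x = c * iteratedDeriv n f x := by
  have := iteratedDerivWithin_const_mul (Set.mem_univ x) uniqueDiffOn_univ c
    ((auxCD hf n).contDiffWithinAt (s := Set.univ))
  simpa [iteratedDerivWithin_univ] using this

lemma aux_itd_sum {ι : Type*} [DecidableEq ι] (s : Finset ι) (F : ι → ℝ → ℝ)
    (hF : ∀ i ∈ s, ContDiff ℝ (⊤:ℕ∞) (F i)) (n : ℕ) (x : ℝ) :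
    iteratedDeriv n (fun y => ∑ i ∈ s, F i y) x = ∑ i ∈ s, iteratedDeriv n (F i) x := by
  induction s using Finset.induction with
  | empty =>
    simp only [Finset.sum_empty]
    have h0 : ∀ (m : ℕ) (t : ℝ), iteratedDeriv m (fun _ : ℝ => (0:ℝ)) t = 0 := by
      intro m
      induction m with
      | zero => simp
      | succ k ih =>
        intro t
        rw [iteratedDeriv_succ']
        have : (deriv fun _ : ℝ => (0:ℝ)) = fun _ : ℝ => (0:ℝ) := funext fun y => deriv_const y 0
        rw [this]; exact ih t
    exact h0 n x
  | @insert a s' hi ih =>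
    simp only [Finset.sum_insert hi]
    rw [aux_itd_add' (hF a (Finset.mem_insert_self a s'))
      (ContDiff.sum fun i hi' => hF i (Finset.mem_insert_of_mem hi')) n x,
      ih fun i hi' => hF i (Finset.mem_insert_of_mem hi')]

/-- In the asymmetric case, any smooth `1`-periodic `p : ℝ → ℝ` with values in `(0,1)`
and `∫ ln p ≠ ∫ ln (1-p)` can be `C^∞`-approximated by `p'` for which
`ln(1-p') - ln p' = c + ψ(·+α) - ψ` for some constant `c ≠ 0` and smooth `ψ`. -/
theorem asymmetric_approx_coboundary_plus_constant (α : ℝ) (hα : Irrational α)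
    (p : ℝ → ℝ) (hsm : ContDiff ℝ (⊤ : ℕ∞) p) (hper : Function.Periodic p 1)
    (hrange : ∀ x, p x ∈ Set.Ioo (0:ℝ) 1)
    (hasym : ∫ x in (0:ℝ)..1, Real.log (p x) ≠ ∫ x in (0:ℝ)..1, Real.log (1 - p x))
    (n : ℕ) (ε : ℝ) (hε : 0 < ε) :
    ∃ p' : ℝ → ℝ, ContDiff ℝ (⊤ : ℕ∞) p' ∧ Function.Periodic p' 1 ∧
      (∀ x, p' x ∈ Set.Ioo (0:ℝ) 1) ∧
      (∃ c : ℝ, c ≠ 0 ∧ ∃ ψ : ℝ → ℝ, ContDiff ℝ (⊤ : ℕ∞) ψ ∧ Function.Periodic ψ 1 ∧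
        ∀ x, Real.log (1 - p' x) - Real.log (p' x) = c + ψ (x + α) - ψ x) ∧
      (∀ k ≤ n, ∀ x, |iteratedDeriv k (fun y => p y - p' y) x| < ε) := by
  have hp0 : ∀ x, 0 < p x := fun x => (hrange x).1
  have hp1 : ∀ x, p x < 1 := fun x => (hrange x).2
  have h1p : ∀ x, 0 < 1 - p x := fun x => by linarith [hp1 x]
  set f : ℝ → ℝ := fun x => Real.log (1 - p x) - Real.log (p x) with hfdef
  have hfsm : ContDiff ℝ (⊤:ℕ∞) f :=
    ((contDiff_const.sub hsm).log fun x => (h1p x).ne').sub (hsm.log fun x => (hp0 x).ne')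
  have hfper : Function.Periodic f 1 := fun x => by simp only [hfdef, hper x]
  have hfcont : Continuous f := hfsm.continuous
  set c : ℝ := ∫ x in (0:ℝ)..1, f x with hcdef
  have hiL1 : IntervalIntegrable (fun x => Real.log (1 - p x)) MeasureTheory.volume 0 1 :=
    (Continuous.log (continuous_const.sub hsm.continuous) fun x => (h1p x).ne').intervalIntegrable 0 1
  have hiL2 : IntervalIntegrable (fun x => Real.log (p x)) MeasureTheory.volume 0 1 :=
    (Continuous.log hsm.continuous fun x => (hp0 x).ne').intervalIntegrable 0 1
  have hcsplit : c = (∫ x in (0:ℝ)..1, Real.log (1 - p x)) - ∫ x in (0:ℝ)..1, Real.log (p x) := by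
    rw [hcdef]
    exact intervalIntegral.integral_sub hiL1 hiL2
  have hc0 : c ≠ 0 := by
    rw [hcsplit]
    exact sub_ne_zero_of_ne (Ne.symm hasym)
  -- the zero-mean part
  set h : ℝ → ℝ := fun x => f x - c with hhdef
  have hhsm : ContDiff ℝ (⊤:ℕ∞) h := hfsm.sub contDiff_const
  have hhper : Function.Periodic h 1 := fun x => by simp only [hhdef, hfper x]
  have hhmean : ∫ x in (0:ℝ)..1, h x = 0 := by
    rw [hhdef]
    rw [intervalIntegral.integral_sub (hfcont.intervalIntegrable 0 1) intervalIntegrable_const]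
    simp [hcdef]
  have hmean_j : ∀ j : ℕ, ∫ x in (0:ℝ)..1, iteratedDeriv j h x = 0 := by
    intro j
    cases j with
    | zero => simpa [iteratedDeriv_zero] using hhmean
    | succ i =>
      have hgsm : ContDiff ℝ (⊤:ℕ∞) (iteratedDeriv i h) := aux_itd_smooth hhsm i
      have hrw : (fun x => iteratedDeriv (i+1) h x) = fun x => deriv (iteratedDeriv i h) x := by
        funext x
        rw [iteratedDeriv_succ]
      have hint : IntervalIntegrable (deriv (iteratedDeriv i h)) MeasureTheory.volume 0 1 :=
        ((aux_deriv_smooth hgsm).continuous).intervalIntegrable 0 1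
      have hdiff : ∀ x ∈ Set.uIcc (0:ℝ) 1, DifferentiableAt ℝ (iteratedDeriv i h) x :=
        fun x _ => (aux_diffble hgsm) x
      calc ∫ x in (0:ℝ)..1, iteratedDeriv (i+1) h x
          = ∫ x in (0:ℝ)..1, deriv (iteratedDeriv i h) x := by rw [hrw]
        _ = iteratedDeriv i h 1 - iteratedDeriv i h 0 :=
            intervalIntegral.integral_deriv_eq_sub hdiff hint
        _ = 0 := by
            have := aux_itd_periodic hhper i 0
            rw [zero_add] at this
            rw [this]
            ring
  -- simultaneous Birkhoff average smallness
  have hWeyl : ∀ δ : ℝ, 0 < δ → ∃ N : ℕ, 1 ≤ N ∧ ∀ j ≤ n, ∀ x : ℝ,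
      |(N:ℝ)⁻¹ * ∑ k ∈ Finset.range N, iteratedDeriv j h (x + k * α)| ≤ δ := by
    intro δ hδ
    have H : ∀ j : ℕ, ∃ N₀ : ℕ, 1 ≤ N₀ ∧ ∀ N, N₀ ≤ N → ∀ x : ℝ,
        |(N:ℝ)⁻¹ * ∑ k ∈ Finset.range N, iteratedDeriv j h (x + k * α)| ≤ δ := fun j =>
      aux_weyl α hα (iteratedDeriv j h) ((aux_itd_smooth hhsm j).continuous)
        (aux_itd_periodic hhper j) (hmean_j j) hδ
    choose Nf hNf1 hNf using H
    refine ⟨(Finset.range (n+1)).sup Nf + 1, by omega, fun j hj x => ?_⟩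
    have hle : Nf j ≤ (Finset.range (n+1)).sup Nf :=
      Finset.le_sup (Finset.mem_range.mpr (Nat.lt_succ_of_le hj))
    exact hNf j _ (by omega) x
  -- the sigmoid
  set σ : ℝ → ℝ := fun t => (1 + Real.exp t)⁻¹ with hσdef
  have hexp_pos : ∀ t : ℝ, (0:ℝ) < 1 + Real.exp t := fun t => by positivity
  have hσsm : ContDiff ℝ (⊤:ℕ∞) σ :=
    (contDiff_const.add Real.contDiff_exp).inv fun t => (hexp_pos t).ne'
  have hpf : ∀ x, p x = σ (f x) := by
    intro x
    rw [hσdef, hfdef]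
    simp only []
    rw [Real.exp_sub, Real.exp_log (h1p x), Real.exp_log (hp0 x)]
    have hpx := hp0 x
    have : 1 + (1 - p x) / p x = 1 / p x := by field_simp; ring
    rw [this, one_div, inv_inv]
  -- the C^n bound for f
  obtain ⟨K, hK0, hKb⟩ := aux_bdd hfsm hfper n
  -- get δ from the composition lemma, then N from Weyl
  obtain ⟨δ, hδ0, hδprop⟩ := aux_comp_diff n σ hσsm f hfsm K hK0 hKb (ε/2) (by positivity)
  obtain ⟨N, hN1, hNprop⟩ := hWeyl δ hδ0
  have hNne : ((N:ℝ)) ≠ 0 := by positivity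
  -- the Birkhoff average
  set r : ℝ → ℝ := fun x => (N:ℝ)⁻¹ * ∑ k ∈ Finset.range N, h (x + k * α) with hrdef
  have hssm : ∀ k : ℕ, ContDiff ℝ (⊤:ℕ∞) (fun y : ℝ => h (y + k * α)) := fun k =>
    hhsm.comp (contDiff_id.add contDiff_const)
  have hSsm : ContDiff ℝ (⊤:ℕ∞) (fun y : ℝ => ∑ k ∈ Finset.range N, h (y + k * α)) :=
    ContDiff.sum fun k _ => hssm k
  have hrsm : ContDiff ℝ (⊤:ℕ∞) r := contDiff_const.mul hSsm
  have hrper : Function.Periodic r 1 := by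
    intro x
    rw [hrdef]
    simp only []
    congr 1
    refine Finset.sum_congr rfl fun k _ => ?_
    rw [show x + 1 + k * α = (x + k * α) + 1 by ring]
    exact hhper _
  have hrb : ∀ j ≤ n, ∀ x, |iteratedDeriv j r x| ≤ δ := by
    intro j hj x
    have e1 : iteratedDeriv j r x
        = (N:ℝ)⁻¹ * ∑ k ∈ Finset.range N, iteratedDeriv j h (x + k * α) := by
      rw [hrdef]
      rw [aux_itd_const_mul hSsm ((N:ℝ)⁻¹) j x]
      congr 1
      rw [aux_itd_sum (Finset.range N) (fun k => fun y => h (y + k * α))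
        (fun k _ => hssm k) j x]
      refine Finset.sum_congr rfl fun k _ => ?_
      exact congrFun (iteratedDeriv_comp_add_const j h (k * α)) x
    rw [e1]
    exact hNprop j hj x
  -- the approximation
  set p' : ℝ → ℝ := fun x => σ (f x - r x) with hp'def
  have hp'sm : ContDiff ℝ (⊤:ℕ∞) p' := hσsm.comp (hfsm.sub hrsm)
  have hp'per : Function.Periodic p' 1 := by
    intro x
    rw [hp'def]
    simp only [hfper x, hrper x]
  have hp'range : ∀ x, p' x ∈ Set.Ioo (0:ℝ) 1 := by
    intro x
    have hE := Real.exp_pos (f x - r x)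
    have h1E := hexp_pos (f x - r x)
    constructor
    · exact inv_pos.mpr h1E
    · rw [hp'def, hσdef]
      simp only []
      rw [inv_lt_one_iff₀]
      right
      linarith
  have hlog : ∀ x, Real.log (1 - p' x) - Real.log (p' x) = f x - r x := by
    intro x
    rw [hp'def, hσdef]
    simp only []
    have hE := Real.exp_pos (f x - r x)
    have h1E := hexp_pos (f x - r x)
    have h1 : 1 - (1 + Real.exp (f x - r x))⁻¹
        = Real.exp (f x - r x) / (1 + Real.exp (f x - r x)) := by field_simp; ring
    rw [h1, Real.log_div hE.ne' h1E.ne', Real.log_inv, Real.log_exp]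
    ring
  -- the coboundary function
  set ψ : ℝ → ℝ := fun x =>
      -((N:ℝ)⁻¹ * ∑ j ∈ Finset.range N, ∑ k ∈ Finset.range j, h (x + k * α)) with hψdef
  have hψsm : ContDiff ℝ (⊤:ℕ∞) ψ :=
    (contDiff_const.mul (ContDiff.sum fun j _ => ContDiff.sum fun k _ => hssm k)).neg
  have hψper : Function.Periodic ψ 1 := by
    intro x
    rw [hψdef]
    simp only []
    congr 2
    refine Finset.sum_congr rfl fun j _ => Finset.sum_congr rfl fun k _ => ?_
    rw [show x + 1 + k * α = (x + k * α) + 1 by ring]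
    exact hhper _
  -- telescoping identity
  have hT : ∀ x : ℝ, (∑ j ∈ Finset.range N, ∑ k ∈ Finset.range j, h (x + α + k * α))
      = (∑ j ∈ Finset.range N, ∑ k ∈ Finset.range j, h (x + k * α))
        + (∑ k ∈ Finset.range N, h (x + k * α)) - N * h x := by
    intro x
    have hrow : ∀ j : ℕ, (∑ k ∈ Finset.range j, h (x + α + k * α))
        = (∑ k ∈ Finset.range j, h (x + k * α)) + h (x + j * α) - h x := by
      intro j
      have h1 : ∀ k : ℕ, h (x + α + k * α) = h (x + ((k+1 : ℕ) : ℝ) * α) := by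
        intro k; congr 1; push_cast; ring
      calc ∑ k ∈ Finset.range j, h (x + α + k * α)
          = ∑ k ∈ Finset.range j, h (x + ((k+1 : ℕ) : ℝ) * α) :=
            Finset.sum_congr rfl fun k _ => h1 k
        _ = (∑ k ∈ Finset.range (j+1), h (x + k * α)) - h (x + ((0:ℕ) : ℝ) * α) := by
            rw [Finset.sum_range_succ' (fun k : ℕ => h (x + (k : ℝ) * α)) j]
            push_cast
            ring
        _ = (∑ k ∈ Finset.range j, h (x + k * α)) + h (x + j * α) - h x := by
            rw [Finset.sum_range_succ]
            push_cast
            ring_nf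
            simp only [mul_comm α]
            ring
    calc ∑ j ∈ Finset.range N, ∑ k ∈ Finset.range j, h (x + α + k * α)
        = ∑ j ∈ Finset.range N,
            ((∑ k ∈ Finset.range j, h (x + k * α)) + h (x + j * α) - h x) :=
          Finset.sum_congr rfl fun j _ => hrow j
      _ = (∑ j ∈ Finset.range N, ∑ k ∈ Finset.range j, h (x + k * α))
            + (∑ j ∈ Finset.range N, h (x + j * α)) - N * h x := by
          rw [Finset.sum_sub_distrib, Finset.sum_add_distrib, Finset.sum_const,
            Finset.card_range]
          push_cast
          ring
  -- the exact cohomological identity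
  have hid : ∀ x : ℝ, Real.log (1 - p' x) - Real.log (p' x) = c + ψ (x + α) - ψ x := by
    intro x
    rw [hlog x, hψdef]
    simp only []
    have hTx := hT x
    have e1 : ∀ k : ℕ, x + α + k * α = x + α + k * α := fun _ => rfl
    rw [hTx]
    have hNN : (N:ℝ)⁻¹ * ((N:ℝ) * h x) = h x := by
      field_simp
    have hfx : f x = c + h x := by rw [hhdef]; ring
    rw [mul_sub, mul_add, hNN]
    rw [hfx, hrdef]
    ring
  refine ⟨p', hp'sm, hp'per, hp'range, ⟨c, hc0, ψ, hψsm, hψper, hid⟩, ?_⟩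
  intro k hk x
  have hfun : (fun y => p y - p' y) = fun y => σ (f y) - σ (f y - r y) := by
    funext y
    rw [hpf y, hp'def]
  rw [hfun]
  calc |iteratedDeriv k (fun y => σ (f y) - σ (f y - r y)) x| ≤ ε/2 :=
      hδprop r hrsm hrb k hk x
    _ < ε := by linarith
end

section
/- Let d, M > 0 and let q be an integer with q > e^{e^{d+M}}. If V is a real trigonometric polynomial of degree at most d whose coefficients are all bounded in absolute value by M, then for any x ∈ 𝕋, |Σ_{j=0}^{q-1} e^{V(x + j/q)} - q ∫_𝕋 e^{V(θ)} dθ| < e^{-q}. -/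
open scoped Real


lemma pow_le_exp_mul_factorial : ∀ m : ℕ, (m:ℝ)^m ≤ Real.exp m * m.factorial := by
  intro m
  induction m with
  | zero => simp
  | succ n ih =>
    have hn : (0:ℝ) ≤ n := Nat.cast_nonneg n
    have key : ((n:ℝ)+1)^(n+1) ≤ Real.exp 1 * ((n:ℝ)+1) * (n:ℝ)^n := by
      rcases Nat.eq_zero_or_pos n with h0 | hpos
      · subst h0; simpa using (by nlinarith [Real.add_one_le_exp (1:ℝ)] : (1:ℝ) ≤ Real.exp 1 * 1 * 1)
      · have hnp : (0:ℝ) < n := by exact_mod_cast hpos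
        have h1 : ((n:ℝ)+1)/n ≤ Real.exp ((1:ℝ)/n) := by
          have := Real.add_one_le_exp ((1:ℝ)/n)
          calc ((n:ℝ)+1)/n = 1/n + 1 := by field_simp; ring
            _ = 1/n + 1 := by ring
            _ ≤ Real.exp (1/n) := by linarith
        have h2 : (((n:ℝ)+1)/n)^n ≤ Real.exp ((1:ℝ)/n) ^ n := by
          apply pow_le_pow_left₀ (by positivity) h1
        have h3 : Real.exp ((1:ℝ)/n) ^ n = Real.exp 1 := by
          rw [← Real.exp_nat_mul]; congr 1; field_simp
        have h4 : ((n:ℝ)+1)^n ≤ Real.exp 1 * (n:ℝ)^n := by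
          have := h2
          rw [div_pow, h3, div_le_iff₀ (by positivity)] at this
          linarith [this]
        calc ((n:ℝ)+1)^(n+1) = ((n:ℝ)+1) * ((n:ℝ)+1)^n := by ring
          _ ≤ ((n:ℝ)+1) * (Real.exp 1 * (n:ℝ)^n) := by
              apply mul_le_mul_of_nonneg_left h4 (by positivity)
          _ = Real.exp 1 * ((n:ℝ)+1) * (n:ℝ)^n := by ring
    have hfact : (0:ℝ) < n.factorial := by exact_mod_cast n.factorial_pos
    calc ((n+1:ℕ):ℝ)^(n+1) = ((n:ℝ)+1)^(n+1) := by push_cast; ring_nf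
      _ ≤ Real.exp 1 * ((n:ℝ)+1) * (n:ℝ)^n := key
      _ ≤ Real.exp 1 * ((n:ℝ)+1) * (Real.exp n * n.factorial) := by
          apply mul_le_mul_of_nonneg_left ih (by positivity)
      _ = Real.exp ((n:ℕ)+1) * (((n:ℝ)+1) * n.factorial) := by
          rw [Real.exp_add]; ring
      _ = Real.exp ((n+1:ℕ):ℝ) * ((n+1:ℕ).factorial : ℝ) := by
          push_cast [Nat.factorial_succ]; ring_nf

lemma real_exp_hasSum (y : ℝ) : HasSum (fun n => y^n / n.factorial) (Real.exp y) := by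
  rw [Real.exp_eq_exp_ℝ]
  exact NormedSpace.expSeries_div_hasSum_exp y

lemma exp_taylor_tail {B y : ℝ} (hB : 0 ≤ B) (hy : |y| ≤ B) (m : ℕ) :
    |Real.exp y - ∑ n ∈ Finset.range m, y^n / n.factorial|
      ≤ B^m / m.factorial * Real.exp B := by
  have hsum := real_exp_hasSum y
  have h1 : Real.exp y - ∑ n ∈ Finset.range m, y^n / n.factorial
      = ∑' i : ℕ, y^(i+m) / ((i+m).factorial : ℝ) := by
    have h := Summable.sum_add_tsum_nat_add m hsum.summable
    rw [hsum.tsum_eq] at h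
    linarith
  have hb : ∀ i : ℕ, |y|^(i+m) / ((i+m).factorial : ℝ)
      ≤ B^m / m.factorial * (B^i / i.factorial) := by
    intro i
    have hfac : (m.factorial : ℝ) * i.factorial ≤ ((i+m).factorial : ℝ) := by
      have h2 : m.factorial * i.factorial ≤ (m+i).factorial :=
        Nat.le_of_dvd (Nat.factorial_pos _) (Nat.factorial_mul_factorial_dvd_factorial_add m i)
      rw [show m + i = i + m from by ring] at h2
      exact_mod_cast h2
    have hm0 : (0:ℝ) < m.factorial := by exact_mod_cast m.factorial_pos
    have hi0 : (0:ℝ) < i.factorial := by exact_mod_cast i.factorial_pos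
    calc |y|^(i+m) / ((i+m).factorial : ℝ)
        ≤ B^(i+m) / ((i+m).factorial : ℝ) := by gcongr
      _ ≤ B^(i+m) / ((m.factorial : ℝ) * i.factorial) := by gcongr
      _ = B^m / m.factorial * (B^i / i.factorial) := by
          rw [pow_add]; field_simp
  have hgs : HasSum (fun i => B^m / m.factorial * (B^i / i.factorial))
      (B^m / m.factorial * Real.exp B) := (real_exp_hasSum B).mul_left _
  have habs : Summable (fun i : ℕ => |y|^(i+m) / ((i+m).factorial : ℝ)) :=
    Summable.of_nonneg_of_le (fun i => by positivity) hb hgs.summable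
  rw [h1]
  have hnorm : ‖∑' i : ℕ, y^(i+m) / ((i+m).factorial : ℝ)‖
      ≤ ∑' i : ℕ, ‖y^(i+m) / ((i+m).factorial : ℝ)‖ :=
    norm_tsum_le_tsum_norm (by simpa [Real.norm_eq_abs] using habs)
  calc |∑' i : ℕ, y^(i+m) / ((i+m).factorial : ℝ)|
      ≤ ∑' i : ℕ, |y|^(i+m) / ((i+m).factorial : ℝ) := by
        simpa [Real.norm_eq_abs, abs_div, abs_pow] using hnorm
    _ ≤ ∑' i : ℕ, B^m / m.factorial * (B^i / i.factorial) :=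
        Summable.tsum_le_tsum hb habs hgs.summable
    _ = B^m / m.factorial * Real.exp B := hgs.tsum_eq

noncomputable def Cc : ℂ := ((2 * Real.pi : ℝ) : ℂ) * Complex.I

lemma Cc_ne_zero : Cc ≠ 0 := by
  simp [Cc, Complex.ext_iff, Real.pi_ne_zero]

lemma exp_Cc_int (k : ℤ) : Complex.exp (Cc * k) = 1 := by
  have := Complex.exp_int_mul_two_pi_mul_I k
  rw [← this]
  congr 1
  simp [Cc]
  ring

lemma integral_exp_freq {k : ℤ} (hk : k ≠ 0) :
    (∫ θ in (0:ℝ)..1, Complex.exp (Cc * k * (θ:ℂ))) = 0 := by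
  have hc : Cc * k ≠ 0 := by
    apply mul_ne_zero Cc_ne_zero
    exact_mod_cast hk
  have := integral_exp_mul_complex hc (a := 0) (b := 1)
  simp only [Complex.ofReal_zero, Complex.ofReal_one, mul_zero, mul_one, Complex.exp_zero] at this
  rw [this, exp_Cc_int k]
  simp

lemma grid_sum_freq {q : ℕ} (hq : 0 < q) {k : ℤ} (hk : k ≠ 0) (hkq : |k| < (q:ℤ)) (x : ℝ) :
    ∑ j ∈ Finset.range q, Complex.exp (Cc * k * (((x + (j:ℝ)/(q:ℝ)) : ℝ):ℂ)) = 0 := by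
  have hq0 : (q:ℂ) ≠ 0 := by exact_mod_cast hq.ne'
  have hterm : ∀ j : ℕ, Complex.exp (Cc * k * (((x + (j:ℝ)/(q:ℝ)) : ℝ):ℂ))
      = Complex.exp (Cc * k * x) * (Complex.exp (Cc * k / q))^j := by
    intro j
    rw [← Complex.exp_nat_mul, ← Complex.exp_add]
    congr 1
    push_cast
    field_simp
  simp only [hterm, ← Finset.mul_sum]
  have hr1 : Complex.exp (Cc * k / q) ≠ 1 := by
    intro h1
    rw [Complex.exp_eq_one_iff] at h1
    obtain ⟨n, hn⟩ := h1
    have h2pi : (2 * (Real.pi:ℂ) * Complex.I) ≠ 0 := by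
      simp [Complex.ext_iff, Real.pi_ne_zero]
    have hCc : Cc = 2 * (Real.pi:ℂ) * Complex.I := by simp [Cc]
    rw [hCc] at hn
    have hkn : (k:ℂ) = n * q := by
      field_simp at hn
      apply mul_left_cancel₀ h2pi
      linear_combination (2 * (Real.pi:ℂ) * Complex.I) * hn
    have hkz : k = n * q := by exact_mod_cast hkn
    rcases eq_or_ne n 0 with h0 | h0
    · exact hk (by simp [hkz, h0])
    · have : (q:ℤ) ≤ |k| := by
        rw [hkz, abs_mul]
        have : 1 ≤ |n| := Int.one_le_abs h0
        calc (q:ℤ) = 1 * q := by ring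
          _ ≤ |n| * |(q:ℤ)| := by
              apply mul_le_mul this (le_abs_self _) (by positivity) (abs_nonneg n)
        
      omega
  rw [geom_sum_eq hr1]
  have hrq : Complex.exp (Cc * k / q) ^ q = 1 := by
    rw [← Complex.exp_nat_mul]
    rw [show (q:ℂ) * (Cc * k / q) = Cc * k from by field_simp, exp_Cc_int]
  rw [hrq]
  simp

lemma grid_eq_int {q : ℕ} (hq : 0 < q) {k : ℤ} (hkq : |k| < (q:ℤ)) (x : ℝ) :
    ∑ j ∈ Finset.range q, Complex.exp (Cc * k * (((x + (j:ℝ)/(q:ℝ)) : ℝ):ℂ))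
      = (q:ℂ) * ∫ θ in (0:ℝ)..1, Complex.exp (Cc * k * (θ:ℂ)) := by
  rcases eq_or_ne k 0 with rfl | hk
  · simp
  · rw [grid_sum_freq hq hk hkq x, integral_exp_freq hk]
    simp

section setup
variable {d : ℕ} {c : ℤ → ℂ} {V : ℝ → ℝ}

lemma V_pow_expand (hV : ∀ x : ℝ, (V x : ℂ) = ∑ k ∈ Finset.Icc (-(d:ℤ)) (d:ℤ),
      c k * Complex.exp (Cc * (k : ℂ) * (x : ℂ))) (n : ℕ) (y : ℝ) :
    ((V y : ℂ))^n = ∑ g ∈ Fintype.piFinset (fun _ : Fin n => Finset.Icc (-(d:ℤ)) (d:ℤ)),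
      (∏ i, c (g i)) * Complex.exp (Cc * ((∑ i, g i : ℤ) : ℂ) * (y:ℂ)) := by
  rw [hV y]
  rw [← Fin.prod_const n (∑ k ∈ Finset.Icc (-(d:ℤ)) (d:ℤ), c k * Complex.exp (Cc * (k : ℂ) * (y:ℂ)))]
  rw [Finset.prod_univ_sum]
  apply Finset.sum_congr rfl
  intro g _
  rw [Finset.prod_mul_distrib]
  congr 1
  rw [← Complex.exp_sum]
  congr 1
  push_cast
  rw [Finset.mul_sum, Finset.sum_mul]

lemma V_pow_grid (hV : ∀ x : ℝ, (V x : ℂ) = ∑ k ∈ Finset.Icc (-(d:ℤ)) (d:ℤ),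
      c k * Complex.exp (Cc * (k : ℂ) * (x : ℂ)))
    (q : ℕ) (hq : 0 < q) (n : ℕ) (hn : n * d < q) (x : ℝ) :
    ∑ j ∈ Finset.range q, ((V (x + (j:ℝ)/(q:ℝ)) : ℝ) : ℂ)^n
      = (q:ℂ) * ∫ θ in (0:ℝ)..1, ((V θ : ℝ):ℂ)^n := by
  have hK : ∀ g ∈ Fintype.piFinset (fun _ : Fin n => Finset.Icc (-(d:ℤ)) (d:ℤ)),
      |(∑ i, g i : ℤ)| < (q:ℤ) := by
    intro g hg
    have : ∀ i, |g i| ≤ (d:ℤ) := by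
      intro i
      have := Fintype.mem_piFinset.mp hg i
      rw [Finset.mem_Icc] at this
      rw [abs_le]
      omega
    calc |(∑ i, g i : ℤ)| ≤ ∑ i, |g i| := Finset.abs_sum_le_sum_abs _ _
      _ ≤ ∑ _i : Fin n, (d:ℤ) := Finset.sum_le_sum (fun i _ => this i)
      _ = (n * d : ℤ) := by simp [mul_comm]
      _ < q := by exact_mod_cast hn
  have hexp : ∀ kk : ℤ, Continuous (fun θ : ℝ => Complex.exp (Cc * (kk : ℂ) * (θ:ℂ))) := by
    intro kk
    exact Complex.continuous_exp.comp (by fun_prop)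
  calc ∑ j ∈ Finset.range q, ((V (x + (j:ℝ)/(q:ℝ)) : ℝ) : ℂ)^n
      = ∑ j ∈ Finset.range q, ∑ g ∈ Fintype.piFinset (fun _ : Fin n => Finset.Icc (-(d:ℤ)) (d:ℤ)),
          (∏ i, c (g i)) * Complex.exp (Cc * ((∑ i, g i : ℤ) : ℂ) * ((x + (j:ℝ)/(q:ℝ) : ℝ):ℂ)) := by
        exact Finset.sum_congr rfl fun j _ => V_pow_expand hV n _
    _ = ∑ g ∈ Fintype.piFinset (fun _ : Fin n => Finset.Icc (-(d:ℤ)) (d:ℤ)),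
          (∏ i, c (g i)) * ∑ j ∈ Finset.range q,
            Complex.exp (Cc * ((∑ i, g i : ℤ) : ℂ) * ((x + (j:ℝ)/(q:ℝ) : ℝ):ℂ)) := by
        rw [Finset.sum_comm]
        exact Finset.sum_congr rfl fun g _ => by rw [Finset.mul_sum]
    _ = ∑ g ∈ Fintype.piFinset (fun _ : Fin n => Finset.Icc (-(d:ℤ)) (d:ℤ)),
          (∏ i, c (g i)) * ((q:ℂ) * ∫ θ in (0:ℝ)..1,
            Complex.exp (Cc * ((∑ i, g i : ℤ) : ℂ) * (θ:ℂ))) := by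
        exact Finset.sum_congr rfl fun g hg => by rw [grid_eq_int hq (hK g hg) x]
    _ = (q:ℂ) * ∫ θ in (0:ℝ)..1, ((V θ : ℝ):ℂ)^n := by
        rw [show (fun θ : ℝ => ((V θ : ℝ):ℂ)^n) = fun θ : ℝ =>
            ∑ g ∈ Fintype.piFinset (fun _ : Fin n => Finset.Icc (-(d:ℤ)) (d:ℤ)),
              (∏ i, c (g i)) * Complex.exp (Cc * ((∑ i, g i : ℤ) : ℂ) * (θ:ℂ)) from
          funext fun θ => V_pow_expand hV n θ]
        rw [intervalIntegral.integral_finset_sum]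
        · rw [Finset.mul_sum]
          exact Finset.sum_congr rfl fun g _ => by
            rw [intervalIntegral.integral_const_mul]; ring
        · intro g _
          exact (Continuous.intervalIntegrable (by exact (continuous_const.mul (hexp _))) _ _)
end setup

section setup2
variable {d : ℕ} {c : ℤ → ℂ} {V : ℝ → ℝ}

lemma V_pow_grid_real
    (hV : ∀ x : ℝ, (V x : ℂ) = ∑ k ∈ Finset.Icc (-(d:ℤ)) (d:ℤ),
      c k * Complex.exp (Cc * (k : ℂ) * (x : ℂ)))
    (q : ℕ) (hq : 0 < q) (n : ℕ) (hn : n * d < q) (x : ℝ) :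
    ∑ j ∈ Finset.range q, (V (x + (j:ℝ)/(q:ℝ)))^n
      = (q:ℝ) * ∫ θ in (0:ℝ)..1, (V θ)^n := by
  have h := V_pow_grid hV q hq n hn x
  have hInt : (∫ θ in (0:ℝ)..1, ((V θ : ℝ):ℂ)^n)
      = ((∫ θ in (0:ℝ)..1, (V θ)^n : ℝ) : ℂ) := by
    rw [← intervalIntegral.integral_ofReal]
    apply intervalIntegral.integral_congr
    intro θ _
    push_cast
    ring
  rw [hInt] at h
  exact_mod_cast h

lemma trunc_grid
    (hV : ∀ x : ℝ, (V x : ℂ) = ∑ k ∈ Finset.Icc (-(d:ℤ)) (d:ℤ),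
      c k * Complex.exp (Cc * (k : ℂ) * (x : ℂ)))
    (hVcont : Continuous V)
    (q m : ℕ) (hq : 0 < q) (hnd : ∀ n < m, n * d < q) (x : ℝ) :
    ∑ j ∈ Finset.range q, (∑ n ∈ Finset.range m, (V (x + (j:ℝ)/(q:ℝ)))^n / n.factorial)
      = (q:ℝ) * ∫ θ in (0:ℝ)..1, ∑ n ∈ Finset.range m, (V θ)^n / n.factorial := by
  have hint : ∀ n : ℕ, IntervalIntegrable (fun θ => (V θ)^n / n.factorial)
      MeasureTheory.volume (0:ℝ) 1 :=
    fun n => ((hVcont.pow n).div_const _).intervalIntegrable _ _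
  rw [intervalIntegral.integral_finset_sum (fun n _ => hint n)]
  rw [Finset.sum_comm]
  rw [Finset.mul_sum]
  apply Finset.sum_congr rfl
  intro n hn
  rw [← Finset.sum_div, intervalIntegral.integral_div,
    V_pow_grid_real hV q hq n (hnd n (Finset.mem_range.mp hn)) x]
  ring
end setup2

set_option maxHeartbeats 2000000 in
lemma numeric_bound (d : ℕ) (M : ℝ) (hd : 0 < d) (hM : 0 < M) (q m : ℕ)
    (hq : Real.exp (Real.exp ((d:ℝ) + M)) < (q:ℝ)) (hmd : (q:ℝ) ≤ (m:ℝ) * d) (hm0 : 0 < m) :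
    2 * (q:ℝ) * ((((2*(d:ℝ)+1)*M)^m / m.factorial) * Real.exp ((2*(d:ℝ)+1)*M))
      < Real.exp (-(q:ℝ)) := by
  set B : ℝ := (2*(d:ℝ)+1)*M with hBdef
  have hd1 : (1:ℝ) ≤ (d:ℝ) := by exact_mod_cast hd
  have hd0 : (0:ℝ) < (d:ℝ) := by linarith
  have hB : 0 < B := by positivity
  have he : (2.7182818283:ℝ) < Real.exp 1 := Real.exp_one_gt_d9
  have he2 : (7.38:ℝ) ≤ Real.exp 1 * Real.exp 1 := by nlinarith [he]
  have hE1 : (1:ℝ) < (d:ℝ) + M := by linarith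
  have hEe : Real.exp 1 < Real.exp ((d:ℝ)+M) := Real.exp_lt_exp.mpr hE1
  have hq12 : (12:ℝ) ≤ (q:ℝ) := by
    have h1 : Real.exp (Real.exp 1) < Real.exp (Real.exp ((d:ℝ)+M)) := Real.exp_lt_exp.mpr hEe
    have h3 : Real.exp (2.7182818283:ℝ) ≤ Real.exp (Real.exp 1) := Real.exp_le_exp.mpr he.le
    have h5 : Real.exp (2.7182818283:ℝ) = Real.exp 1 * Real.exp 1 * Real.exp 0.7182818283 := by
      rw [← Real.exp_add, ← Real.exp_add]; norm_num
    have hx : (1.71:ℝ) ≤ Real.exp 0.7182818283 := by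
      have := Real.add_one_le_exp (0.7182818283:ℝ); linarith
    have h6 : (7.38:ℝ)*(1.71:ℝ) ≤ (Real.exp 1 * Real.exp 1) * Real.exp 0.7182818283 :=
      mul_le_mul he2 hx (by norm_num) (by positivity)
    nlinarith
  have hq0 : (0:ℝ) < q := by linarith
  have hmR : (0:ℝ) < m := by exact_mod_cast hm0
  have hlogq : Real.exp ((d:ℝ)+M) < Real.log q := by
    have := Real.log_lt_log (Real.exp_pos _) hq
    rwa [Real.log_exp] at this
  have hexpd : Real.exp 1 * (d:ℝ) ≤ Real.exp d := by
    have h1 : (d:ℝ) ≤ Real.exp ((d:ℝ)-1) := by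
      have := Real.add_one_le_exp ((d:ℝ)-1); linarith
    calc Real.exp 1 * (d:ℝ) ≤ Real.exp 1 * Real.exp ((d:ℝ)-1) := by
          nlinarith [Real.exp_pos (1:ℝ)]
      _ = Real.exp (d:ℝ) := by rw [← Real.exp_add]; ring_nf
  have h27d : (2.7:ℝ)*(d:ℝ) ≤ Real.exp (d:ℝ) := by
    have h := mul_le_mul_of_nonneg_right he.le hd0.le
    linarith [hexpd]
  have h2d1 : 2*(d:ℝ)+1 ≤ Real.exp (d:ℝ) * Real.exp 1 := by
    have h := mul_le_mul_of_nonneg_right hexpd (Real.exp_pos 1).le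
    have h7 : (7.38:ℝ)*(d:ℝ) ≤ (Real.exp 1 * Real.exp 1) * (d:ℝ) :=
      mul_le_mul_of_nonneg_right he2 hd0.le
    nlinarith
  have hBE : B ≤ Real.exp ((d:ℝ)+M) := by
    have h2 : Real.exp ((d:ℝ)+1) = Real.exp (d:ℝ) * Real.exp 1 := Real.exp_add _ _
    have h1 : 2*(d:ℝ)+1 ≤ Real.exp ((d:ℝ)+1) := by linarith
    have h3 : M ≤ Real.exp (M-1) := by have := Real.add_one_le_exp (M-1); linarith
    calc B = (2*(d:ℝ)+1)*M := rfl
      _ ≤ Real.exp ((d:ℝ)+1) * Real.exp (M-1) :=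
          mul_le_mul h1 h3 hM.le (Real.exp_pos _).le
      _ = Real.exp ((d:ℝ)+M) := by rw [← Real.exp_add]; ring_nf
  have hBlogq : B < Real.log q := lt_of_le_of_lt hBE hlogq
  have hlogd : Real.log d ≤ (d:ℝ) - 1 := Real.log_le_sub_one_of_pos (by linarith)
  have hlogd0 : (0:ℝ) ≤ Real.log d := Real.log_nonneg hd1
  have hstar : 1.5*(d:ℝ) + 1 + Real.log d + Real.log B ≤ Real.exp ((d:ℝ)+M) := by
    have hsplit : Real.exp ((d:ℝ)+M) = Real.exp (d:ℝ) * Real.exp M := Real.exp_add _ _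
    have hexpM : 1 + M ≤ Real.exp M := by have := Real.add_one_le_exp M; linarith
    have p1 : Real.exp (d:ℝ) + Real.exp (d:ℝ)*M ≤ Real.exp (d:ℝ) * Real.exp M := by
      have := mul_le_mul_of_nonneg_left hexpM (Real.exp_pos (d:ℝ)).le
      nlinarith
    rcases le_or_gt B 1 with hB1 | hB1
    · have hlB : Real.log B ≤ 0 := Real.log_nonpos hB.le hB1
      have hM0 : (0:ℝ) ≤ Real.exp (d:ℝ) * M := by positivity
      linarith [h27d, hlogd]
    · have hlB : Real.log B ≤ B / Real.exp 1 := by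
        have h1 : Real.log (B/Real.exp 1) ≤ B/Real.exp 1 - 1 :=
          Real.log_le_sub_one_of_pos (by positivity)
        rw [Real.log_div hB.ne' (Real.exp_ne_zero 1), Real.log_exp] at h1
        linarith
      have hkey : Real.log B ≤ Real.exp (d:ℝ) * M := by
        have h6 : (2*(d:ℝ)+1)*M ≤ (Real.exp (d:ℝ) * Real.exp 1)*M :=
          mul_le_mul_of_nonneg_right h2d1 hM.le
        have h7 : B / Real.exp 1 ≤ Real.exp (d:ℝ) * M := by
          rw [div_le_iff₀ (Real.exp_pos 1)]
          nlinarith [h6]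
        linarith
      linarith [h27d, hlogd, p1]
  -- Stirling step
  have hfac : (0:ℝ) < m.factorial := by exact_mod_cast m.factorial_pos
  have hstir : B^m / m.factorial ≤ (Real.exp 1 * B / m)^m := by
    have h1 : ((m:ℝ))^m ≤ Real.exp m * m.factorial := pow_le_exp_mul_factorial m
    have hrw : (Real.exp 1 * B / (m:ℝ))^m = Real.exp m * B^m / (m:ℝ)^m := by
      rw [div_pow, mul_pow, Real.exp_one_pow]
    rw [hrw, div_le_div_iff₀ hfac (by positivity)]
    have h2 : B^m * ((m:ℝ))^m ≤ B^m * (Real.exp m * m.factorial) :=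
      mul_le_mul_of_nonneg_left h1 (by positivity)
    calc B^m * ((m:ℝ))^m ≤ B^m * (Real.exp m * m.factorial) := h2
      _ = Real.exp m * B^m * m.factorial := by ring
  -- main log inequality
  set L := Real.log ((m:ℝ) / (Real.exp 1 * B)) with hL
  have hqd : (q:ℝ)/d ≤ (m:ℝ) := by
    rw [div_le_iff₀ (by linarith)]; linarith
  have hLge : 1.5*(d:ℝ) < L := by
    have harg : (q:ℝ)/((d:ℝ) * (Real.exp 1 * B)) ≤ (m:ℝ)/(Real.exp 1 * B) := by
      rw [← div_div]
      gcongr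
    have h1 : Real.log ((q:ℝ)/((d:ℝ) * (Real.exp 1 * B))) ≤ L := by
      rw [hL]
      exact Real.log_le_log (by positivity) harg
    have h2 : Real.log ((q:ℝ)/((d:ℝ) * (Real.exp 1 * B)))
        = Real.log q - Real.log d - 1 - Real.log B := by
      rw [Real.log_div (by positivity) (by positivity),
          Real.log_mul (by positivity) (by positivity),
          Real.log_mul (Real.exp_ne_zero 1) hB.ne', Real.log_exp]
      ring
    linarith
  have hL0 : (0:ℝ) < L := by linarith
  have hmain : 1.5*(q:ℝ) < (m:ℝ) * L := by
    calc 1.5*(q:ℝ) = ((q:ℝ)/d)*(1.5*d) := by field_simp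
      _ < ((q:ℝ)/d)*L := by
          apply mul_lt_mul_of_pos_left hLge (by positivity)
      _ ≤ (m:ℝ) * L := mul_le_mul_of_nonneg_right hqd hL0.le
  have hlogq2 : Real.log 2 + 2*Real.log q ≤ 0.5*q := by
    have h16 : Real.log ((q:ℝ)/16) ≤ (q:ℝ)/16 - 1 := Real.log_le_sub_one_of_pos (by positivity)
    rw [Real.log_div (by positivity) (by norm_num)] at h16
    have hl16 : Real.log 16 = 4*Real.log 2 := by
      rw [show (16:ℝ) = 2^(4:ℕ) by norm_num, Real.log_pow]; push_cast; ring
    have hl2 : Real.log 2 < 0.6931471808 := Real.log_two_lt_d9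
    have hl20 : (0:ℝ) < Real.log 2 := Real.log_pos (by norm_num)
    linarith
  have hZpos : (0:ℝ) < 2 * (q:ℝ) * ((Real.exp 1 * B / m) ^ m * Real.exp B) := by positivity
  have hrwZ : Real.log (2 * (q:ℝ) * ((Real.exp 1 * B / m) ^ m * Real.exp B))
      = Real.log 2 + Real.log q + (m:ℝ) * Real.log (Real.exp 1 * B / m) + B := by
    rw [Real.log_mul (by positivity) (by positivity),
        Real.log_mul (by norm_num) (by positivity),
        Real.log_mul (by positivity) (Real.exp_ne_zero B),
        Real.log_pow, Real.log_exp]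
    push_cast
    ring
  have hneg : Real.log (Real.exp 1 * B / m) = -L := by
    rw [hL, Real.log_div (by positivity) (by positivity),
        Real.log_div (by positivity) (by positivity)]
    ring
  have hlogZ : Real.log (2 * (q:ℝ) * ((Real.exp 1 * B / m) ^ m * Real.exp B)) < -(q:ℝ) := by
    rw [hrwZ, hneg]
    have hmm : (m:ℝ) * -L = -((m:ℝ)*L) := by ring
    rw [hmm]
    linarith
  calc 2 * (q:ℝ) * ((B^m / m.factorial) * Real.exp B)
      ≤ 2 * (q:ℝ) * ((Real.exp 1 * B / m) ^ m * Real.exp B) := by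
        gcongr
    _ = Real.exp (Real.log (2 * (q:ℝ) * ((Real.exp 1 * B / m) ^ m * Real.exp B))) :=
        (Real.exp_log hZpos).symm
    _ < Real.exp (-(q:ℝ)) := Real.exp_lt_exp.mpr hlogZ

/-- If `V` is a real-valued trigonometric polynomial of degree at most `d` whose
coefficients are bounded by `M`, and `q > e^{e^{d+M}}`, then for any `x` the average
of `e^V` over the grid `x + j/q`, `j = 0,…,q-1`, is within `e^{-q}` of `q ∫ e^V`. -/
theorem trig_poly_exp_sum (d : ℕ) (M : ℝ) (hd : 0 < d) (hM : 0 < M)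
    (q : ℕ) (hq : Real.exp (Real.exp ((d : ℝ) + M)) < (q : ℝ))
    (c : ℤ → ℂ) (hc : ∀ k, ‖c k‖ ≤ M)
    (V : ℝ → ℝ)
    (hV : ∀ x : ℝ, (V x : ℂ) = ∑ k ∈ Finset.Icc (-(d:ℤ)) (d:ℤ),
        c k * Complex.exp (((2 * Real.pi : ℝ) : ℂ) * Complex.I * (k : ℂ) * (x : ℂ))) :
    ∀ x : ℝ,
      |∑ j ∈ Finset.range q, Real.exp (V (x + (j : ℝ) / (q : ℝ)))
          - (q : ℝ) * ∫ θ in (0:ℝ)..1, Real.exp (V θ)| < Real.exp (-(q : ℝ)) := by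
  intro x
  have hV' : ∀ x : ℝ, (V x : ℂ) = ∑ k ∈ Finset.Icc (-(d:ℤ)) (d:ℤ),
      c k * Complex.exp (Cc * (k : ℂ) * (x : ℂ)) := by
    intro y
    rw [hV y]
    rfl
  set B : ℝ := (2*(d:ℝ)+1)*M with hBdef
  have hB : 0 < B := by positivity
  have hqR : (0:ℝ) < q := lt_trans (Real.exp_pos _) hq
  have hq0 : 0 < q := by exact_mod_cast hqR
  set N : ℕ := (q-1)/d with hN
  set m : ℕ := N+1 with hm
  have hm0 : 0 < m := Nat.succ_pos _
  have hmdN : q - 1 < m * d := by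
    rw [hm, hN]
    exact (Nat.div_lt_iff_lt_mul hd).mp (Nat.lt_succ_self _)
  have hmd : (q:ℝ) ≤ (m:ℝ) * d := by
    have : q ≤ m * d := by omega
    exact_mod_cast this
  have hnd : ∀ n < m, n * d < q := by
    intro n hn
    have h1 : n ≤ N := by omega
    have h2 : N * d ≤ q - 1 := Nat.div_mul_le_self _ _
    have h3 : n * d ≤ N * d := Nat.mul_le_mul_right _ h1
    omega
  -- continuity of V
  have hVcont : Continuous V := by
    have hF : Continuous (fun y : ℝ => ∑ k ∈ Finset.Icc (-(d:ℤ)) (d:ℤ),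
        c k * Complex.exp (Cc * (k : ℂ) * (y : ℂ))) := by
      apply continuous_finset_sum
      intro k _
      exact continuous_const.mul (Complex.continuous_exp.comp (by fun_prop))
    have hVeq : V = fun y : ℝ => (∑ k ∈ Finset.Icc (-(d:ℤ)) (d:ℤ),
        c k * Complex.exp (Cc * (k : ℂ) * (y : ℂ))).re := by
      funext y
      rw [← hV' y]
      simp
    rw [hVeq]
    exact Complex.continuous_re.comp hF
  -- bound on V
  have hVB : ∀ y : ℝ, |V y| ≤ B := by
    intro y
    have h1 : |V y| = ‖((V y : ℝ) : ℂ)‖ := by rw [Complex.norm_real, Real.norm_eq_abs]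
    rw [h1, hV' y]
    calc ‖∑ k ∈ Finset.Icc (-(d:ℤ)) (d:ℤ),
            c k * Complex.exp (Cc * (k : ℂ) * (y : ℂ))‖
        ≤ ∑ k ∈ Finset.Icc (-(d:ℤ)) (d:ℤ),
            ‖c k * Complex.exp (Cc * (k : ℂ) * (y : ℂ))‖ := by
          exact norm_sum_le _ _
      _ ≤ ∑ _k ∈ Finset.Icc (-(d:ℤ)) (d:ℤ), M := by
          apply Finset.sum_le_sum
          intro k _
          rw [norm_mul]
          have habs1 : ‖Complex.exp (Cc * (k : ℂ) * (y : ℂ))‖ = 1 := by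
            rw [show Cc * (k:ℂ) * (y:ℂ) = ((2*Real.pi*k*y : ℝ):ℂ) * Complex.I from by
              simp [Cc]; push_cast; ring]
            exact Complex.norm_exp_ofReal_mul_I _
          rw [habs1, mul_one]
          exact hc k
      _ = B := by
          rw [Finset.sum_const, Int.card_Icc]
          have : ((d:ℤ) + 1 - (-(d:ℤ))).toNat = 2*d+1 := by omega
          rw [this]
          push_cast
          ring
  -- tail bound
  have htail : ∀ y : ℝ, |Real.exp (V y) - ∑ n ∈ Finset.range m, (V y)^n / n.factorial|
      ≤ B^m / m.factorial * Real.exp B := fun y => exp_taylor_tail hB.le (hVB y) m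
  set τ : ℝ := B^m / m.factorial * Real.exp B with hτ
  -- grid identity for truncation
  have key := trunc_grid hV' hVcont q m hq0 hnd x
  -- integrability
  have hintexp : IntervalIntegrable (fun θ => Real.exp (V θ)) MeasureTheory.volume (0:ℝ) 1 :=
    (Real.continuous_exp.comp hVcont).intervalIntegrable _ _
  have hintT : IntervalIntegrable (fun θ => ∑ n ∈ Finset.range m, (V θ)^n / n.factorial)
      MeasureTheory.volume (0:ℝ) 1 := by
    apply Continuous.intervalIntegrable
    apply continuous_finset_sum
    intro n _
    exact (hVcont.pow n).div_const _
  -- bound on integral difference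
  have hIdiff : |(∫ θ in (0:ℝ)..1, Real.exp (V θ))
      - ∫ θ in (0:ℝ)..1, ∑ n ∈ Finset.range m, (V θ)^n / n.factorial| ≤ τ := by
    rw [← intervalIntegral.integral_sub hintexp hintT]
    have h := intervalIntegral.norm_integral_le_of_norm_le_const
      (C := τ) (f := fun θ => Real.exp (V θ) - ∑ n ∈ Finset.range m, (V θ)^n / n.factorial)
      (a := (0:ℝ)) (b := 1) ?_
    · simpa [Real.norm_eq_abs] using h
    · intro θ _
      simpa [Real.norm_eq_abs] using htail θ
  -- bound on sum difference
  have hSdiff : |(∑ j ∈ Finset.range q, Real.exp (V (x + (j:ℝ)/(q:ℝ))))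
      - ∑ j ∈ Finset.range q, ∑ n ∈ Finset.range m, (V (x + (j:ℝ)/(q:ℝ)))^n / n.factorial|
      ≤ (q:ℝ) * τ := by
    rw [← Finset.sum_sub_distrib]
    calc |∑ j ∈ Finset.range q, (Real.exp (V (x + (j:ℝ)/(q:ℝ)))
            - ∑ n ∈ Finset.range m, (V (x + (j:ℝ)/(q:ℝ)))^n / n.factorial)|
        ≤ ∑ j ∈ Finset.range q, |Real.exp (V (x + (j:ℝ)/(q:ℝ)))
            - ∑ n ∈ Finset.range m, (V (x + (j:ℝ)/(q:ℝ)))^n / n.factorial| :=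
          Finset.abs_sum_le_sum_abs _ _
      _ ≤ ∑ _j ∈ Finset.range q, τ := Finset.sum_le_sum (fun j _ => htail _)
      _ = (q:ℝ) * τ := by
          rw [Finset.sum_const, Finset.card_range]
          simp [nsmul_eq_mul]
  -- combine
  have hsplit : ∑ j ∈ Finset.range q, Real.exp (V (x + (j:ℝ)/(q:ℝ)))
      - (q:ℝ) * ∫ θ in (0:ℝ)..1, Real.exp (V θ)
      = ((∑ j ∈ Finset.range q, Real.exp (V (x + (j:ℝ)/(q:ℝ))))
          - ∑ j ∈ Finset.range q, ∑ n ∈ Finset.range m, (V (x + (j:ℝ)/(q:ℝ)))^n / n.factorial)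
        - (q:ℝ) * ((∫ θ in (0:ℝ)..1, Real.exp (V θ))
          - ∫ θ in (0:ℝ)..1, ∑ n ∈ Finset.range m, (V θ)^n / n.factorial) := by
    rw [key]
    ring
  rw [hsplit]
  have habs : ∀ p r : ℝ, |p - r| ≤ |p| + |r| := fun p r => by
    calc |p - r| = |p + (-r)| := by ring_nf
      _ ≤ |p| + |(-r)| := abs_add_le _ _
      _ = |p| + |r| := by rw [abs_neg]
  calc |((∑ j ∈ Finset.range q, Real.exp (V (x + (j:ℝ)/(q:ℝ))))
          - ∑ j ∈ Finset.range q, ∑ n ∈ Finset.range m, (V (x + (j:ℝ)/(q:ℝ)))^n / n.factorial)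
        - (q:ℝ) * ((∫ θ in (0:ℝ)..1, Real.exp (V θ))
          - ∫ θ in (0:ℝ)..1, ∑ n ∈ Finset.range m, (V θ)^n / n.factorial)|
      ≤ |(∑ j ∈ Finset.range q, Real.exp (V (x + (j:ℝ)/(q:ℝ))))
          - ∑ j ∈ Finset.range q, ∑ n ∈ Finset.range m, (V (x + (j:ℝ)/(q:ℝ)))^n / n.factorial|
        + |(q:ℝ) * ((∫ θ in (0:ℝ)..1, Real.exp (V θ))
          - ∫ θ in (0:ℝ)..1, ∑ n ∈ Finset.range m, (V θ)^n / n.factorial)| := habs _ _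
    _ ≤ (q:ℝ)*τ + (q:ℝ)*τ := by
        apply add_le_add hSdiff
        rw [abs_mul, abs_of_pos hqR]
        exact mul_le_mul_of_nonneg_left hIdiff hqR.le
    _ = 2*(q:ℝ)*τ := by ring
    _ < Real.exp (-(q:ℝ)) := by
        rw [hτ, hBdef]
        exact numeric_bound d M hd hM q m hq hmd hm0
end

section
/- Enhanced Borel–Cantelli lemma: let (C_n)_{n≥1} be a sequence of events such that for each k ≥ 1, Σ_{n=k}^{∞} P(C_n | ∩_{j=k}^{n-1} C_j^c) = +∞ (where the conditional probability is interpreted as 0 when the conditioning event has probability 0 unless divergence is forced). Then with probability 1, infinitely many of the events C_n occur. -/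
open MeasureTheory

/-- Enhanced Borel–Cantelli lemma: if for each `k` the series of conditional
probabilities `P(C_n | ⋂_{j=k}^{n-1} C_jᶜ)` diverges (in `ℝ≥0∞`, where `0/0 = 0` and
`a/0 = ⊤` for `a ≠ 0`), then almost surely infinitely many of the events `C_n` occur. -/
theorem enhanced_borel_cantelli {Ω : Type*} [MeasurableSpace Ω] (P : Measure Ω)
    [IsProbabilityMeasure P] (C : ℕ → Set Ω) (hC : ∀ n, MeasurableSet (C n))
    (hdiv : ∀ k : ℕ,
      (∑' n : ℕ, P (C (k + n) ∩ ⋂ j ∈ Finset.Ico k (k + n), (C j)ᶜ)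
          / P (⋂ j ∈ Finset.Ico k (k + n), (C j)ᶜ)) = ⊤) :
    P (Filter.limsup C Filter.atTop) = 1 := by
  classical
  set D : ℕ → ℕ → Set Ω := fun k n => ⋂ j ∈ Finset.Ico k (k + n), (C j)ᶜ with hD
  have hDmeas : ∀ k n, MeasurableSet (D k n) := fun k n =>
    Finset.measurableSet_biInter _ fun j _ => (hC j).compl
  have hDsucc : ∀ k n, D k (n + 1) = D k n ∩ (C (k + n))ᶜ := by
    intro k n
    simp only [hD]
    rw [show k + (n + 1) = (k + n) + 1 by ring,
      Nat.Ico_succ_right_eq_insert_Ico (Nat.le_add_right k n),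
      Finset.set_biInter_insert, Set.inter_comm]
  have hrec : ∀ k n, P (C (k + n) ∩ D k n) + P (D k (n + 1)) = P (D k n) := by
    intro k n
    have := measure_inter_add_diff (μ := P) (D k n) (hC (k + n))
    rw [Set.inter_comm, Set.diff_eq, ← hDsucc k n] at this
    exact this
  -- key : the probability of avoiding all C_j with j ≥ k is 0
  have key : ∀ k, (⨅ n, P (D k n)) = 0 := by
    intro k
    by_contra hL
    set L := ⨅ n, P (D k n) with hLdef
    have hpartial : ∀ N, (∑ n ∈ Finset.range N, P (C (k + n) ∩ D k n)) + P (D k N)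
        = P (D k 0) := by
      intro N
      induction N with
      | zero => simp
      | succ N ih =>
        rw [Finset.sum_range_succ, add_assoc, hrec k N, ih]
    have hD0 : P (D k 0) = 1 := by
      simp [hD]
    have htsum_le : (∑' n, P (C (k + n) ∩ D k n)) ≤ 1 := by
      rw [ENNReal.tsum_eq_iSup_sum]
      refine iSup_le fun s => ?_
      obtain ⟨N, hN⟩ := s.exists_nat_subset_range
      calc (∑ n ∈ s, P (C (k + n) ∩ D k n))
          ≤ ∑ n ∈ Finset.range N, P (C (k + n) ∩ D k n) :=
            Finset.sum_le_sum_of_subset hN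
        _ ≤ 1 := by rw [← hD0, ← hpartial N]; exact le_add_right le_rfl
    have hterm : ∀ n, P (C (k + n) ∩ D k n) / P (D k n)
        ≤ P (C (k + n) ∩ D k n) / L :=
      fun n => ENNReal.div_le_div le_rfl (iInf_le _ n)
    have hsum_le : (∑' n, P (C (k + n) ∩ D k n) / P (D k n)) ≤ 1 / L := by
      calc (∑' n, P (C (k + n) ∩ D k n) / P (D k n))
          ≤ ∑' n, P (C (k + n) ∩ D k n) / L := ENNReal.tsum_le_tsum hterm
        _ = (∑' n, P (C (k + n) ∩ D k n)) / L := by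
            simp only [div_eq_mul_inv, ENNReal.tsum_mul_right]
        _ ≤ 1 / L := by
            exact ENNReal.div_le_div htsum_le le_rfl
    have : (∑' n, P (C (k + n) ∩ D k n) / P (D k n)) ≠ ⊤ := by
      refine ne_top_of_le_ne_top ?_ hsum_le
      exact (ENNReal.div_lt_top ENNReal.one_ne_top hL).ne
    exact this (hdiv k)
  -- each tail-avoidance set is null
  have hnull : ∀ k, P (⋂ i, ⋂ _ : k ≤ i, (C i)ᶜ) = 0 := by
    intro k
    refine le_antisymm ?_ zero_le
    rw [← key k]
    refine le_iInf fun n => measure_mono ?_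
    intro x hx
    simp only [Set.mem_iInter] at hx
    simp only [hD, Set.mem_iInter]
    intro j hj
    exact hx j (Finset.mem_Ico.mp hj).1
  have hlimsup : Filter.limsup C Filter.atTop = ⋂ k, ⋃ i, ⋃ _ : k ≤ i, C i := by
    rw [Filter.limsup_eq_iInf_iSup_of_nat]
    simp [Set.iInf_eq_iInter, Set.iSup_eq_iUnion]
  have hcompl : P ((Filter.limsup C Filter.atTop)ᶜ) = 0 := by
    rw [hlimsup, Set.compl_iInter]
    refine measure_iUnion_null fun k => ?_
    rw [Set.compl_iUnion]
    simp only [Set.compl_iUnion]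
    exact hnull k
  have hmeas : MeasurableSet (Filter.limsup C Filter.atTop) := by
    rw [hlimsup]
    exact MeasurableSet.iInter fun k => MeasurableSet.iUnion fun i =>
      MeasurableSet.iUnion fun _ => hC i
  rw [← prob_compl_eq_zero_iff hmeas]
  exact hcompl
end

section
/- Let α be irrational, 𝔭 ∈ C^∞(𝕋,(0,1)) with ∫ ln 𝔭 > ∫ ln(1-𝔭) (asymmetric case). Then the function ρ(x) = (1/𝔭(x)) Σ_{k=0}^{∞} Π_{j=1}^{k} (1-𝔭(x+jα))/𝔭(x+jα) is well defined (the series converges for almost every x with respect to Lebesgue measure), and ρ satisfies the stationarity equation ρ(x) = 𝔭(x-α)ρ(x-α) + (1-𝔭(x+α))ρ(x+α) for almost every x. -/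
open MeasureTheory Filter Finset Function AddCircle Complex

namespace StatAux

lemma fourier_add_arg {n : ℤ} (x y : AddCircle (1:ℝ)) :
    fourier n (x + y) = fourier n x * fourier n y := by
  simp only [fourier_apply, smul_add, toCircle_add, Circle.coe_mul]

lemma fourier_nsmul {n : ℤ} (j : ℕ) (a : AddCircle (1:ℝ)) :
    fourier n (j • a) = fourier n a ^ j := by
  induction j with
  | zero =>
    rw [zero_nsmul, show (0 : AddCircle (1:ℝ)) = ((0:ℝ) : AddCircle (1:ℝ)) from
      (QuotientAddGroup.mk_zero _).symm, fourier_coe_apply]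
    simp
  | succ j ih => rw [succ_nsmul, fourier_add_arg, ih, pow_succ]

lemma integral_fourier_eq_zero {n : ℤ} (hn : n ≠ 0) :
    ∫ z : AddCircle (1:ℝ), fourier n z = 0 :=
  integral_eq_zero_of_add_right_eq_neg (fourier_add_half_inv_index hn one_pos)

lemma integrable_cm (F : C(AddCircle (1:ℝ), ℂ)) :
    Integrable F (volume : Measure (AddCircle (1:ℝ))) :=
  F.continuous.integrable_of_hasCompactSupport (HasCompactSupport.of_compactSpace F)

/-- Birkhoff sums converge uniformly with the right rate eventually. -/
def Good (a : AddCircle (1:ℝ)) (F : C(AddCircle (1:ℝ), ℂ)) : Prop :=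
  ∀ ε : ℝ, 0 < ε → ∃ N : ℕ, ∀ n ≥ N, ∀ y : AddCircle (1:ℝ),
    ‖(∑ j ∈ Finset.range n, F (y + j • a)) - (n : ℂ) * ∫ z, F z‖ ≤ ε * n

lemma good_zero (a : AddCircle (1:ℝ)) : Good a 0 := by
  intro ε hε
  refine ⟨0, fun n _ y => ?_⟩
  simp [integral_zero]
  positivity

lemma good_add {a : AddCircle (1:ℝ)} {F G : C(AddCircle (1:ℝ), ℂ)}
    (hF : Good a F) (hG : Good a G) : Good a (F + G) := by
  intro ε hε
  obtain ⟨N₁, h₁⟩ := hF (ε/2) (by positivity)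
  obtain ⟨N₂, h₂⟩ := hG (ε/2) (by positivity)
  refine ⟨max N₁ N₂, fun n hn y => ?_⟩
  have e1 := h₁ n (le_trans (le_max_left _ _) hn) y
  have e2 := h₂ n (le_trans (le_max_right _ _) hn) y
  have hint : ∫ z : AddCircle (1:ℝ), (F + G) z = (∫ z, F z) + ∫ z, G z := by
    simp only [ContinuousMap.add_apply]
    exact integral_add (integrable_cm F) (integrable_cm G)
  have : (∑ j ∈ Finset.range n, (F + G) (y + j • a)) - (n : ℂ) * ∫ z, (F + G) z
      = ((∑ j ∈ Finset.range n, F (y + j • a)) - (n : ℂ) * ∫ z, F z)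
        + ((∑ j ∈ Finset.range n, G (y + j • a)) - (n : ℂ) * ∫ z, G z) := by
    rw [hint]
    simp [Finset.sum_add_distrib]
    ring
  rw [this]
  calc ‖_ + _‖ ≤ _ + _ := norm_add_le _ _
    _ ≤ ε/2 * n + ε/2 * n := add_le_add e1 e2
    _ = ε * n := by ring

lemma good_smul {a : AddCircle (1:ℝ)} (c : ℂ) {F : C(AddCircle (1:ℝ), ℂ)}
    (hF : Good a F) : Good a (c • F) := by
  rcases eq_or_ne c 0 with rfl | hc
  · have h0 : (0:ℂ) • F = 0 := zero_smul ℂ F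
    rw [h0]; exact good_zero a
  intro ε hε
  obtain ⟨N, h⟩ := hF (ε/‖c‖) (div_pos hε (norm_pos_iff.2 hc))
  refine ⟨N, fun n hn y => ?_⟩
  have hint : ∫ z : AddCircle (1:ℝ), (c • F) z = c * ∫ z, F z := by
    simp only [ContinuousMap.smul_apply, smul_eq_mul]
    exact integral_const_mul c _
  have : (∑ j ∈ Finset.range n, (c • F) (y + j • a)) - (n : ℂ) * ∫ z, (c • F) z
      = c * ((∑ j ∈ Finset.range n, F (y + j • a)) - (n : ℂ) * ∫ z, F z) := by
    rw [hint]
    simp only [ContinuousMap.smul_apply, smul_eq_mul, ← Finset.mul_sum]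
    ring
  rw [this, norm_mul]
  have hcn : ‖c‖ ≠ 0 := norm_ne_zero_iff.2 hc
  calc ‖c‖ * ‖_‖ ≤ ‖c‖ * (ε/‖c‖ * n) := by
        exact mul_le_mul_of_nonneg_left (h n hn y) (norm_nonneg c)
    _ = ε * n := by
        field_simp [hcn]
    
lemma good_fourier (a : AddCircle (1:ℝ)) (ha : ∀ n : ℤ, n ≠ 0 → fourier n a ≠ 1)
    (m : ℤ) : Good a (fourier m) := by
  rcases eq_or_ne m 0 with rfl | hm
  · intro ε hε
    refine ⟨0, fun n _ y => ?_⟩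
    have h1 : ∀ z : AddCircle (1:ℝ), fourier (0:ℤ) z = 1 := fun z => fourier_zero
    have : (∑ j ∈ Finset.range n, fourier (0:ℤ) (y + j • a))
        - (n : ℂ) * ∫ z : AddCircle (1:ℝ), fourier (0:ℤ) z = 0 := by
      simp only [h1]
      rw [integral_const]
      simp [AddCircle.measure_univ, measureReal_def]
    rw [this, norm_zero]
    positivity
  · intro ε hε
    set lam : ℂ := fourier m a with hlam
    have hlam1 : lam ≠ 1 := ha m hm
    set C : ℝ := 2 / ‖lam - 1‖ with hC
    have hCnn : 0 ≤ C := by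
      apply div_nonneg two_pos.le (norm_nonneg _)
    refine ⟨⌈C/ε⌉₊, fun n hn y => ?_⟩
    rw [integral_fourier_eq_zero hm, mul_zero, sub_zero]
    have hsum : (∑ j ∈ Finset.range n, fourier m (y + j • a))
        = fourier m y * ∑ j ∈ Finset.range n, lam ^ j := by
      rw [Finset.mul_sum]
      exact Finset.sum_congr rfl fun j _ => by rw [fourier_add_arg, fourier_nsmul]
    rw [hsum, norm_mul]
    have hnormy : ‖fourier m y‖ = 1 := by simp [fourier_apply, Circle.norm_coe]
    rw [hnormy, one_mul]
    have hgeom : ∑ j ∈ Finset.range n, lam ^ j = (lam ^ n - 1) / (lam - 1) :=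
      geom_sum_eq hlam1 n
    have hnorml : ‖lam‖ = 1 := by simp [hlam, fourier_apply, Circle.norm_coe]
    have hlam0 : (0:ℝ) < ‖lam - 1‖ := norm_pos_iff.2 (sub_ne_zero.2 hlam1)
    have hb : ‖∑ j ∈ Finset.range n, lam ^ j‖ ≤ C := by
      rw [hgeom, norm_div, hC]
      gcongr
      calc ‖lam ^ n - 1‖ ≤ ‖lam ^ n‖ + ‖(1:ℂ)‖ := norm_sub_le _ _
        _ = 2 := by rw [norm_pow, hnorml, one_pow, norm_one]; norm_num
    calc ‖∑ j ∈ Finset.range n, lam ^ j‖ ≤ C := hb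
      _ ≤ ε * ⌈C/ε⌉₊ := (div_le_iff₀' hε).1 (Nat.le_ceil _)
      _ ≤ ε * n := by
          apply mul_le_mul_of_nonneg_left _ hε.le
          exact_mod_cast hn

lemma good_of_mem_span {a : AddCircle (1:ℝ)} (ha : ∀ n : ℤ, n ≠ 0 → fourier n a ≠ 1)
    {F : C(AddCircle (1:ℝ), ℂ)}
    (hF : F ∈ Submodule.span ℂ (Set.range (@fourier (1:ℝ)))) : Good a F := by
  induction hF using Submodule.span_induction with
  | mem x hx => obtain ⟨m, rfl⟩ := hx; exact good_fourier a ha m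
  | zero => exact good_zero a
  | add x y hx hy ihx ihy => exact good_add ihx ihy
  | smul c x hx ih => exact good_smul c ih

lemma weyl_circle (a : AddCircle (1:ℝ)) (ha : ∀ n : ℤ, n ≠ 0 → fourier n a ≠ 1)
    (F : C(AddCircle (1:ℝ), ℂ)) : Good a F := by
  intro ε hε
  have hdense : F ∈ closure ((Submodule.span ℂ (Set.range (@fourier (1:ℝ))) :
      Submodule ℂ C(AddCircle (1:ℝ), ℂ)) : Set C(AddCircle (1:ℝ), ℂ)) := by
    rw [← Submodule.topologicalClosure_coe, span_fourier_closure_eq_top]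
    trivial
  obtain ⟨g, hgmem, hgd⟩ := Metric.mem_closure_iff.1 hdense (ε/3) (by positivity)
  obtain ⟨N, hN⟩ := good_of_mem_span ha hgmem (ε/3) (by positivity)
  refine ⟨N, fun n hn y => ?_⟩
  have hpt : ∀ z, ‖F z - g z‖ ≤ ε/3 := fun z => by
    rw [← dist_eq_norm]
    exact (ContinuousMap.dist_apply_le_dist z).trans hgd.le
  have h1 : dist (∑ j ∈ Finset.range n, F (y + j • a)) (∑ j ∈ Finset.range n, g (y + j • a))
      ≤ ε/3 * n := by
    rw [dist_eq_norm, ← Finset.sum_sub_distrib]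
    calc ‖∑ j ∈ Finset.range n, (F (y + j • a) - g (y + j • a))‖
        ≤ ∑ j ∈ Finset.range n, ‖F (y + j • a) - g (y + j • a)‖ := norm_sum_le _ _
      _ ≤ ∑ _j ∈ Finset.range n, (ε/3) := Finset.sum_le_sum fun j _ => hpt _
      _ = ε/3 * n := by simp [mul_comm]
  have hI : ‖(∫ z, F z) - ∫ z : AddCircle (1:ℝ), g z‖ ≤ ε/3 := by
    rw [← integral_sub (integrable_cm F) (integrable_cm g)]
    have h := norm_integral_le_of_norm_le_const (μ := (volume : Measure (AddCircle (1:ℝ))))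
      (C := ε/3) (Filter.Eventually.of_forall fun z => hpt z)
    simpa [AddCircle.measure_univ, measureReal_def] using h
  have h3 : dist ((n:ℂ) * ∫ z, g z) ((n:ℂ) * ∫ z, F z) ≤ ε/3 * n := by
    rw [dist_eq_norm, ← mul_sub, norm_mul, Complex.norm_natCast, mul_comm]
    have : ‖(∫ z : AddCircle (1:ℝ), g z) - ∫ z, F z‖ ≤ ε/3 := by
      rw [norm_sub_rev]; exact hI
    exact mul_le_mul_of_nonneg_right this (Nat.cast_nonneg n)
  have h2 : dist (∑ j ∈ Finset.range n, g (y + j • a)) ((n:ℂ) * ∫ z, g z) ≤ ε/3 * n := by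
    rw [dist_eq_norm]; exact hN n hn y
  calc ‖(∑ j ∈ Finset.range n, F (y + j • a)) - (n : ℂ) * ∫ z, F z‖
      = dist (∑ j ∈ Finset.range n, F (y + j • a)) ((n : ℂ) * ∫ z, F z) := (dist_eq_norm _ _).symm
    _ ≤ _ + _ + _ := dist_triangle4 _ (∑ j ∈ Finset.range n, g (y + j • a)) ((n:ℂ) * ∫ z, g z) _
    _ ≤ ε/3 * n + ε/3 * n + ε/3 * n := by gcongr -- or add_le_add
    _ = ε * n := by ring

lemma fourier_coe_ne_one {α : ℝ} (hα : Irrational α) {n : ℤ} (hn : n ≠ 0) :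
    fourier n ((α : ℝ) : AddCircle (1:ℝ)) ≠ 1 := by
  intro h
  rw [fourier_coe_apply] at h
  obtain ⟨k, hk⟩ := Complex.exp_eq_one_iff.1 h
  have h2 : (2 * (Real.pi:ℂ) * Complex.I) ≠ 0 := by
    simp [Real.pi_ne_zero, Complex.I_ne_zero, Complex.ofReal_ne_zero]
  have hk2 : (2 * (Real.pi:ℂ) * Complex.I) * ((n:ℂ) * (α:ℂ))
      = (2 * (Real.pi:ℂ) * Complex.I) * (k:ℂ) := by
    rw [Complex.ofReal_one, div_one] at hk
    linear_combination hk
  have hc : ((n:ℂ) * (α:ℂ)) = (k:ℂ) := mul_left_cancel₀ h2 hk2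
  have hr : (n : ℝ) * α = (k : ℝ) := by exact_mod_cast hc
  have hn' : (n : ℝ) ≠ 0 := Int.cast_ne_zero.2 hn
  have hrat : α = ((k : ℚ)/(n : ℚ) : ℚ) := by
    push_cast
    rw [eq_div_iff hn', mul_comm]
    exact hr
  exact hα ⟨(k : ℚ)/(n : ℚ), hrat.symm⟩

lemma weyl_real (α : ℝ) (hα : Irrational α) (f : ℝ → ℝ) (hf : Continuous f)
    (hper : Function.Periodic f 1) {ε : ℝ} (hε : 0 < ε) :
    ∃ N : ℕ, ∀ n, N ≤ n → ∀ x : ℝ,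
      ∑ j ∈ Finset.range n, f (x + j * α) ≤ n * (∫ t in (0:ℝ)..1, f t) + ε * n := by
  set fc : ℝ → ℂ := fun t => (f t : ℂ) with hfc
  have hperc : Function.Periodic fc 1 := fun t => by simp [hfc, hper t]
  have hcont : Continuous fc := Complex.continuous_ofReal.comp hf
  set F : C(AddCircle (1:ℝ), ℂ) := ⟨hperc.lift, continuous_coinduced_dom.mpr hcont⟩ with hFdef
  have hFcoe : ∀ t : ℝ, F ((t : ℝ) : AddCircle (1:ℝ)) = fc t := fun t =>
    Function.Periodic.lift_coe hperc t
  have hInt : (∫ z, F z) = ((∫ t in (0:ℝ)..1, f t : ℝ) : ℂ) := by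
    rw [← AddCircle.integral_preimage (1:ℝ) 0 F,
      intervalIntegral.integral_of_le (by norm_num : (0:ℝ) ≤ 1), zero_add]
    simp_rw [hFcoe]
    exact integral_ofReal
  obtain ⟨N, hN⟩ := weyl_circle ((α : ℝ) : AddCircle (1:ℝ))
    (fun n hn => fourier_coe_ne_one hα hn) F ε hε
  refine ⟨N, fun n hn x => ?_⟩
  have horbit : ∀ j : ℕ, ((x : ℝ) : AddCircle (1:ℝ)) + j • ((α : ℝ) : AddCircle (1:ℝ))
      = ((x + (j : ℝ) * α : ℝ) : AddCircle (1:ℝ)) := by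
    intro j
    rw [← QuotientAddGroup.mk_nsmul, ← QuotientAddGroup.mk_add, nsmul_eq_mul]
  have hb := hN n hn ((x : ℝ) : AddCircle (1:ℝ))
  rw [hInt] at hb
  have hsum : (∑ j ∈ Finset.range n, F (((x : ℝ) : AddCircle (1:ℝ)) + j • ((α : ℝ) : AddCircle (1:ℝ))))
      = ((∑ j ∈ Finset.range n, f (x + (j:ℝ) * α) : ℝ) : ℂ) := by
    rw [Complex.ofReal_sum]
    exact Finset.sum_congr rfl fun j _ => by rw [horbit j, hFcoe]
  rw [hsum] at hb
  have heq : ((∑ j ∈ Finset.range n, f (x + (j:ℝ)*α) : ℝ) : ℂ)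
        - (n:ℂ) * ((∫ t in (0:ℝ)..1, f t : ℝ):ℂ)
      = (((∑ j ∈ Finset.range n, f (x + (j:ℝ)*α)) - n * (∫ t in (0:ℝ)..1, f t) : ℝ) : ℂ) := by
    push_cast
    ring
  rw [heq, Complex.norm_real, Real.norm_eq_abs] at hb
  have hle := le_abs_self ((∑ j ∈ Finset.range n, f (x + (j:ℝ)*α)) - n * (∫ t in (0:ℝ)..1, f t))
  linarith

end StatAux


/-- The candidate stationary density
`ρ(x) = (1/p(x)) ∑_{k=0}^∞ ∏_{j=1}^{k} (1-p(x+jα))/p(x+jα)`. -/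
noncomputable def statDensity (p : ℝ → ℝ) (α : ℝ) (x : ℝ) : ℝ :=
  (1 / p x) * ∑' k : ℕ, ∏ j ∈ Finset.Icc 1 k, (1 - p (x + (j:ℝ) * α)) / p (x + (j:ℝ) * α)

/-- In the asymmetric case `∫ ln p > ∫ ln (1-p)`, the series defining `ρ` converges for
Lebesgue-almost every `x`, and `ρ` satisfies the stationarity equation
`ρ(x) = p(x-α) ρ(x-α) + (1-p(x+α)) ρ(x+α)` almost everywhere. -/
theorem stationary_density_asymmetric (α : ℝ) (hα : Irrational α)
    (p : ℝ → ℝ) (hsm : ContDiff ℝ (⊤ : ℕ∞) p) (hper : Function.Periodic p 1)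
    (hrange : ∀ x, p x ∈ Set.Ioo (0:ℝ) 1)
    (hasym : ∫ x in (0:ℝ)..1, Real.log (1 - p x) < ∫ x in (0:ℝ)..1, Real.log (p x)) :
    (∀ᵐ x : ℝ, Summable (fun k : ℕ =>
        ∏ j ∈ Finset.Icc 1 k, (1 - p (x + (j:ℝ) * α)) / p (x + (j:ℝ) * α))) ∧
    (∀ᵐ x : ℝ, statDensity p α x
        = p (x - α) * statDensity p α (x - α)
          + (1 - p (x + α)) * statDensity p α (x + α)) := by

  have hp0 : ∀ x, 0 < p x := fun x => (hrange x).1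
  have hp1 : ∀ x, p x < 1 := fun x => (hrange x).2
  set r : ℝ → ℝ := fun x => (1 - p x) / p x with hrdef
  have hr_pos : ∀ x, 0 < r x := fun x => div_pos (by linarith [hp1 x]) (hp0 x)
  have hpc : Continuous p := hsm.continuous
  set g : ℝ → ℝ := fun x => Real.log (1 - p x) - Real.log (p x) with hgdef
  have hgr : ∀ x, g x = Real.log (r x) := fun x =>
    (Real.log_div (by linarith [hp1 x]) (hp0 x).ne').symm
  have h_exp_g : ∀ x, Real.exp (g x) = r x := fun x => by
    rw [hgr x]; exact Real.exp_log (hr_pos x)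
  have hg_cont : Continuous g := by
    apply Continuous.sub
    · exact continuous_iff_continuousAt.2 fun x =>
        (Real.continuousAt_log (by linarith [hp1 x])).comp
          ((continuous_const.sub hpc).continuousAt)
    · exact continuous_iff_continuousAt.2 fun x =>
        (Real.continuousAt_log (hp0 x).ne').comp hpc.continuousAt
  have hg_per : Function.Periodic g 1 := fun x => by simp [hgdef, hper x]
  set c : ℝ := ∫ x in (0:ℝ)..1, g x with hcdef
  have hc_eq : c = (∫ x in (0:ℝ)..1, Real.log (1 - p x)) - ∫ x in (0:ℝ)..1, Real.log (p x) := by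
    rw [hcdef]
    apply intervalIntegral.integral_sub
    · apply Continuous.intervalIntegrable
      exact continuous_iff_continuousAt.2 fun x =>
        (Real.continuousAt_log (by linarith [hp1 x])).comp
          ((continuous_const.sub hpc).continuousAt)
    · apply Continuous.intervalIntegrable
      exact continuous_iff_continuousAt.2 fun x =>
        (Real.continuousAt_log (hp0 x).ne').comp hpc.continuousAt
  have hc_neg : c < 0 := by rw [hc_eq]; linarith
  obtain ⟨N, hN⟩ := StatAux.weyl_real α hα g hg_cont hg_per (ε := -c/2) (by linarith)
  set q : ℝ := Real.exp (c/2) with hqdef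
  have hq0 : 0 < q := Real.exp_pos _
  have hq1 : q < 1 := Real.exp_lt_one_iff.2 (by linarith)
  set P : ℕ → ℝ → ℝ := fun k x => ∏ j ∈ Finset.Icc 1 k, r (x + (j:ℝ) * α) with hPdef
  have hP_range : ∀ k x, P k x = ∏ j ∈ Finset.range k, r ((x + α) + (j:ℝ) * α) := by
    intro k x
    show (∏ j ∈ Finset.Icc 1 k, r (x + (j:ℝ) * α)) = _
    rw [← Finset.Ico_add_one_right_eq_Icc, Finset.prod_Ico_eq_prod_range]
    simp only [Nat.add_sub_cancel, Nat.succ_sub_one]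
    exact Finset.prod_congr rfl fun j _ => by congr 1; push_cast; ring
  have hP_pos : ∀ k x, 0 < P k x := fun k x => Finset.prod_pos fun j _ => hr_pos _
  have hP_le : ∀ x, ∀ k, N ≤ k → P k x ≤ q ^ k := by
    intro x k hk
    rw [hP_range]
    have hsum_le := hN k hk (x + α)
    have : (∏ j ∈ Finset.range k, r ((x + α) + (j:ℝ) * α))
        = Real.exp (∑ j ∈ Finset.range k, g ((x + α) + (j:ℝ) * α)) := by
      rw [Real.exp_sum]
      exact Finset.prod_congr rfl fun j _ => (h_exp_g _).symm
    rw [this]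
    calc Real.exp (∑ j ∈ Finset.range k, g ((x + α) + (j:ℝ) * α))
        ≤ Real.exp ((k:ℝ) * (c/2)) := by
          apply Real.exp_le_exp.2
          have : (k:ℝ) * c + (-c/2) * k = (k:ℝ) * (c/2) := by ring
          linarith [hsum_le]
      _ = q ^ k := by
          rw [hqdef, ← Real.exp_nat_mul]
  have hSum : ∀ x, Summable (fun k => P k x) := by
    intro x
    rw [← summable_nat_add_iff N]
    apply Summable.of_nonneg_of_le (fun k => (hP_pos _ _).le)
      (fun k => hP_le x (k + N) (Nat.le_add_left N k))
    simp_rw [pow_add]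
    exact (summable_geometric_of_lt_one hq0.le hq1).mul_right _
  have hP0 : ∀ x, P 0 x = 1 := fun x => by
    rw [hPdef]; simp
  have hshift2 : ∀ x k, P (k+1) (x - α) = r x * P k x := by
    intro x k
    rw [hP_range, hP_range]
    rw [Finset.prod_range_succ']
    rw [mul_comm]
    congr 1
    · congr 1; ring
    · exact Finset.prod_congr rfl fun j _ => by congr 1; push_cast; ring
  have hshift1 : ∀ x k, P (k+1) x = r (x + α) * P k (x + α) := by
    intro x k
    rw [hP_range, hP_range]
    rw [Finset.prod_range_succ']
    rw [mul_comm]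
    congr 1
    · congr 1; ring
    · exact Finset.prod_congr rfl fun j _ => by congr 1; push_cast; ring
  set S : ℝ → ℝ := fun x => ∑' k, P k x with hSdef
  have hstat : ∀ y, statDensity p α y = (1 / p y) * S y := fun y => rfl
  have hS_split : ∀ x, S x = 1 + ∑' k, P (k+1) x := by
    intro x
    show (∑' k, P k x) = _
    rw [Summable.tsum_eq_zero_add (hSum x), hP0]
  have key1 : ∀ x, S (x - α) = 1 + r x * S x := by
    intro x
    rw [hS_split (x - α)]
    congr 1
    simp_rw [hshift2 x]
    exact tsum_mul_left
  have key2 : ∀ x, r (x + α) * S (x + α) = S x - 1 := by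
    intro x
    have : r (x + α) * S (x + α) = ∑' k, P (k+1) x := by
      simp_rw [hshift1 x]
      exact tsum_mul_left.symm
    rw [this]
    rw [hS_split x]
    ring
  constructor
  · exact Filter.Eventually.of_forall fun x => hSum x
  · apply Filter.Eventually.of_forall
    intro x
    rw [hstat, hstat, hstat]
    have e1 : p (x - α) * ((1 / p (x - α)) * S (x - α)) = S (x - α) := by
      field_simp
      exact mul_div_cancel_left₀ _ (hp0 (x - α)).ne'
    have e2 : (1 - p (x + α)) * ((1 / p (x + α)) * S (x + α)) = r (x + α) * S (x + α) := by
      rw [hrdef]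
      ring
    rw [e1, e2, key1 x, key2 x]
    have hpx : p x ≠ 0 := (hp0 x).ne'
    rw [hrdef]
    field_simp
    ring
end
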